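/- Let G = (N, P, S) be an SL-HR grammar and A ∈ N. Let G' be the grammar obtained from G by replacing every A-labeled edge occurring in S and in the right-hand sides of the other rules by rhs(A) (i.e., applying the rule for A to each such edge) and then removing A together with its rule. Then G' is an SL-HR grammar with val(G') isomorphic to val(G), and |G'| = |G| + con(A), where con(A) = ref(A)·(|rhs(A)| − |handle(A)|) − |rhs(A)|. -/

import Mathlib

open scoped Classical

/-- A hypergraph over a label type `L`: nodes and edges are natural-number
identifiers, `att` gives the attachment sequence of an edge, `lab` its label,
and `ext` is the sequence of external nodes. -/
structure HRHypergraph (L : Type) where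
  V : Finset ℕ
  E : Finset ℕ
  att : ℕ → List ℕ
  lab : ℕ → L
  ext : List ℕ

namespace HRHypergraph

variable {L : Type}

/-- Well-formedness of a hypergraph over a ranked alphabet `rk`:
nodes nonempty, attachments are nonempty repetition-free sequences of nodes
whose length is the rank of the label, and the external nodes form a
repetition-free sequence of nodes. -/
def WF (rk : L → ℕ) (g : HRHypergraph L) : Prop :=
  g.V.Nonempty ∧
    (∀ e ∈ g.E, (∀ v ∈ g.att e, v ∈ g.V) ∧ (g.att e).Nodup ∧
      (g.att e).length = rk (g.lab e) ∧ g.att e ≠ []) ∧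
    (∀ v ∈ g.ext, v ∈ g.V) ∧ g.ext.Nodup

/-- The edge size `|g|_E`: simple edges (rank ≤ 2) count 1, a hyperedge of
rank `n > 2` counts `n`. -/
def esize (g : HRHypergraph L) : ℕ :=
  ∑ e ∈ g.E, (if (g.att e).length ≤ 2 then 1 else (g.att e).length)

/-- The size `|g| = |g|_V + |g|_E`. -/
def size (g : HRHypergraph L) : ℕ := g.V.card + g.esize

/-- Isomorphism of hypergraphs: bijections on nodes and edges preserving
attachment, labels and external nodes. -/
def Isomorphic (g h : HRHypergraph L) : Prop :=
  ∃ f fe : ℕ → ℕ,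
    Set.BijOn f ↑g.V ↑h.V ∧ Set.BijOn fe ↑g.E ↑h.E ∧
    (∀ e ∈ g.E, h.att (fe e) = (g.att e).map f) ∧
    (∀ e ∈ g.E, h.lab (fe e) = g.lab e) ∧
    h.ext = g.ext.map f

end HRHypergraph

/-- `IsReplacement g e₀ h g'` holds if `g'` is (a realization of) the
replacement `g[e₀/h]`: the edge `e₀` is removed from `g`, a disjoint copy of
`h` (renamed via `ρ` on nodes and `η` on edges) is adjoined, and the i-th
external node of `h` is identified with the i-th attachment node of `e₀`. -/
def IsReplacement {L : Type} (g : HRHypergraph L) (e₀ : ℕ) (h : HRHypergraph L)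
    (g' : HRHypergraph L) : Prop :=
  ∃ ρ η : ℕ → ℕ,
    Set.InjOn ρ ↑h.V ∧ Set.InjOn η ↑h.E ∧
    (∀ v ∈ h.V, v ∉ h.ext → ρ v ∉ g.V) ∧
    h.ext.map ρ = g.att e₀ ∧
    (∀ e ∈ h.E, η e ∉ g.E) ∧
    g'.V = g.V ∪ h.V.image ρ ∧
    g'.E = g.E.erase e₀ ∪ h.E.image η ∧
    (∀ e ∈ g.E.erase e₀, g'.att e = g.att e ∧ g'.lab e = g.lab e) ∧
    (∀ e ∈ h.E, g'.att (η e) = (h.att e).map ρ ∧ g'.lab (η e) = h.lab e) ∧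
    g'.ext = g.ext

/-- An HR grammar over a terminal alphabet `T`: nonterminals are natural
numbers (`NT`), `rkN` gives their ranks, `rhs` the unique right-hand side of
each nonterminal, and `S` is the start graph.  Labels of graphs occurring in
the grammar are `T ⊕ ℕ` (terminals on the left, nonterminals on the right). -/
structure HRGrammar (T : Type) where
  NT : Finset ℕ
  rkN : ℕ → ℕ
  rhs : ℕ → HRHypergraph (T ⊕ ℕ)
  S : HRHypergraph (T ⊕ ℕ)

namespace HRGrammar

variable {T : Type}

/-- The rank function on labels `T ⊕ ℕ` induced by terminal ranks `rkT`. -/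
def rk (G : HRGrammar T) (rkT : T → ℕ) : T ⊕ ℕ → ℕ := Sum.elim rkT G.rkN

/-- Well-formedness of an HR grammar over ranked alphabet `rkT`:
all ranks are ≥ 1, the start graph and all right-hand sides are well-formed,
`rank(A) = rank(rhs A)` for all nonterminals, and all nonterminal labels
occurring in the grammar are declared nonterminals. -/
def WF (G : HRGrammar T) (rkT : T → ℕ) : Prop :=
  (∀ a : T, 1 ≤ rkT a) ∧ (∀ A ∈ G.NT, 1 ≤ G.rkN A) ∧
    G.S.WF (G.rk rkT) ∧
    (∀ A ∈ G.NT, (G.rhs A).WF (G.rk rkT) ∧ (G.rhs A).ext.length = G.rkN A) ∧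
    (∀ e ∈ G.S.E, ∀ B : ℕ, G.S.lab e = Sum.inr B → B ∈ G.NT) ∧
    (∀ A ∈ G.NT, ∀ e ∈ (G.rhs A).E, ∀ B : ℕ, (G.rhs A).lab e = Sum.inr B → B ∈ G.NT)

/-- The dependency relation: `dep G A B` iff a `B`-labeled edge occurs in
`rhs(A)`. -/
def dep (G : HRGrammar T) (A B : ℕ) : Prop :=
  A ∈ G.NT ∧ B ∈ G.NT ∧ ∃ e ∈ (G.rhs A).E, (G.rhs A).lab e = Sum.inr B

/-- Straight-line condition: the dependency relation is acyclic, and every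
nonterminal occurs in some derivation from the start graph (i.e., it is
reachable, via dependencies, from a nonterminal occurring in `S`).  (Every
nonterminal has exactly one rule by construction, since `rhs` is a
function.) -/
def SL (G : HRGrammar T) : Prop :=
  (∀ A : ℕ, ¬ Relation.TransGen G.dep A A) ∧
    (∀ A ∈ G.NT, ∃ B : ℕ, (∃ e ∈ G.S.E, G.S.lab e = Sum.inr B) ∧
      Relation.ReflTransGen G.dep B A)

/-- One derivation step: replace some nonterminal edge by its right-hand
side. -/
def Derive (G : HRGrammar T) (g g' : HRHypergraph (T ⊕ ℕ)) : Prop :=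
  ∃ e ∈ g.E, ∃ A ∈ G.NT, g.lab e = Sum.inr A ∧ IsReplacement g e (G.rhs A) g'

/-- A graph is terminal if all its edge labels are terminal symbols. -/
def Terminal (g : HRHypergraph (T ⊕ ℕ)) : Prop :=
  ∀ e ∈ g.E, ∃ a : T, g.lab e = Sum.inl a

/-- The language of the grammar: all terminal graphs derivable from `S`. -/
def Lang (G : HRGrammar T) : Set (HRHypergraph (T ⊕ ℕ)) :=
  { g | Relation.ReflTransGen G.Derive G.S g ∧ Terminal g }

/-- The size `|G| = |S| + Σ_{(A,g) ∈ P} |g|`. -/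
def size (G : HRGrammar T) : ℕ :=
  G.S.size + ∑ A ∈ G.NT, (G.rhs A).size

end HRGrammar

namespace HRGrammar

variable {T : Type}

/-- `ref(A)`: the total number of `A`-labeled edges occurring in the start
graph and in the right-hand sides of the rules of `G`. -/
noncomputable def refCount (G : HRGrammar T) (A : ℕ) : ℕ :=
  (G.S.E.filter fun e => G.S.lab e = Sum.inr A).card +
    ∑ B ∈ G.NT, ((G.rhs B).E.filter fun e => (G.rhs B).lab e = Sum.inr A).card

/-- `|handle(A)|`: the size of the graph consisting of `rank(A)` external
nodes and a single `A`-edge attached to all of them. -/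
def handleSize (G : HRGrammar T) (A : ℕ) : ℕ :=
  if G.rkN A ≤ 2 then G.rkN A + 1 else 2 * G.rkN A

/-- The contribution of `A`:
`con(A) = ref(A)·(|rhs(A)| − |handle(A)|) − |rhs(A)|`. -/
noncomputable def con (G : HRGrammar T) (A : ℕ) : ℤ :=
  (G.refCount A : ℤ) * (((G.rhs A).size : ℤ) - G.handleSize A) - (G.rhs A).size

/-- One step of eliminating the nonterminal `A` from a graph: apply the rule
`A → rhs(A)` to some `A`-labeled edge. -/
def ElimStep (G : HRGrammar T) (A : ℕ) (x y : HRHypergraph (T ⊕ ℕ)) : Prop :=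
  ∃ e ∈ x.E, x.lab e = Sum.inr A ∧ IsReplacement x e (G.rhs A) y

/-- `ElimAll G A x y`: `y` is obtained from `x` by applying the rule for `A`
to every `A`-labeled edge (so that no `A`-labeled edge remains). -/
def ElimAll (G : HRGrammar T) (A : ℕ) (x y : HRHypergraph (T ⊕ ℕ)) : Prop :=
  Relation.ReflTransGen (G.ElimStep A) x y ∧ ∀ e ∈ y.E, y.lab e ≠ Sum.inr A

end HRGrammar

namespace HypAux

variable {L : Type}

/-- Light well-formedness of a hypergraph. -/
def Ok (g : HRHypergraph L) : Prop :=
  (∀ e ∈ g.E, (∀ v ∈ g.att e, v ∈ g.V) ∧ (g.att e).Nodup) ∧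
    (∀ v ∈ g.ext, v ∈ g.V) ∧ g.ext.Nodup

theorem Ok.of_wf {rk : L → ℕ} {g : HRHypergraph L} (h : g.WF rk) : Ok g :=
  ⟨fun e he => ⟨(h.2.1 e he).1, (h.2.1 e he).2.1⟩, h.2.2⟩

theorem list_map_getD {l₁ l₂ : List ℕ} (hn : l₁.Nodup) (hlen : l₁.length = l₂.length) :
    l₁.map (fun v => l₂.getD (l₁.idxOf v) 0) = l₂ := by
  apply List.ext_getElem (by simpa using hlen)
  intro i h1 h2
  simp only [List.getElem_map]
  rw [List.Nodup.idxOf_getElem hn]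
  exact List.getD_eq_getElem l₂ 0 h2

theorem map_eq_map_pointwise {α β : Type*} {l : List α} {f g : α → β}
    (h : l.map f = l.map g) : ∀ a ∈ l, f a = g a :=
  List.map_eq_map_iff.mp h

theorem iso_refl (g : HRHypergraph L) : g.Isomorphic g :=
  ⟨id, id, Set.bijOn_id _, Set.bijOn_id _, by simp, by simp, by simp⟩

theorem iso_trans {g h k : HRHypergraph L} (h1 : g.Isomorphic h) (h2 : h.Isomorphic k) :
    g.Isomorphic k := by
  obtain ⟨f1, fe1, hb1, he1, ha1, hl1, hx1⟩ := h1
  obtain ⟨f2, fe2, hb2, he2, ha2, hl2, hx2⟩ := h2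
  refine ⟨f2 ∘ f1, fe2 ∘ fe1, hb2.comp hb1, he2.comp he1, ?_, ?_, ?_⟩
  · intro e he
    have h1e : fe1 e ∈ h.E := he1.mapsTo he
    rw [Function.comp_apply, ha2 _ h1e, ha1 _ he, List.map_map]
  · intro e he
    have h1e : fe1 e ∈ h.E := he1.mapsTo he
    rw [Function.comp_apply, hl2 _ h1e, hl1 _ he]
  · rw [hx2, hx1, List.map_map]

theorem iso_symm {g h : HRHypergraph L} (hok : Ok g) (h1 : g.Isomorphic h) :
    h.Isomorphic g := by
  obtain ⟨f, fe, hb, he, ha, hl, hx⟩ := h1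
  have hfinv := hb.injOn.leftInvOn_invFunOn
  have hfeinv := he.injOn.leftInvOn_invFunOn
  have hfsurj : ∀ w ∈ h.V, ∃ v ∈ g.V, f v = w := fun w hw => hb.surjOn hw
  have hfesurj : ∀ x ∈ h.E, ∃ e ∈ g.E, fe e = x := fun x hxx => he.surjOn hxx
  refine ⟨Function.invFunOn f ↑g.V, Function.invFunOn fe ↑g.E,
    hb.symm hb.invOn_invFunOn.symm, he.symm he.invOn_invFunOn.symm, ?_, ?_, ?_⟩
  · intro x hxE
    obtain ⟨e, heE, rfl⟩ := hfesurj x hxE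
    rw [hfeinv heE, ha e heE, List.map_map]
    have : ∀ v ∈ g.att e, (Function.invFunOn f ↑g.V ∘ f) v = v := by
      intro v hv; exact hfinv ((hok.1 e heE).1 v hv)
    rw [List.map_congr_left this]; simp
  · intro x hxE
    obtain ⟨e, heE, rfl⟩ := hfesurj x hxE
    rw [hfeinv heE, hl e heE]
  · rw [hx, List.map_map]
    have : ∀ v ∈ g.ext, (Function.invFunOn f ↑g.V ∘ f) v = v := by
      intro v hv; exact hfinv (hok.2.1 v hv)
    rw [List.map_congr_left this]; simp

theorem terminal_of_iso {T : Type} {g h : HRHypergraph (T ⊕ ℕ)}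
    (hiso : g.Isomorphic h) (ht : HRGrammar.Terminal h) : HRGrammar.Terminal g := by
  obtain ⟨f, fe, hb, he, ha, hl, hx⟩ := hiso
  intro e heE
  obtain ⟨a, hA⟩ := ht (fe e) (he.mapsTo heE)
  exact ⟨a, by rw [← hl e heE, hA]⟩

end HypAux

namespace HypAux

variable {L : Type}

/-- canonical node renaming for replacement with offset `N` -/
noncomputable def rho (g : HRHypergraph L) (e₀ : ℕ) (h : HRHypergraph L) (N : ℕ) : ℕ → ℕ :=
  fun v => if v ∈ h.ext then (g.att e₀).getD (h.ext.idxOf v) 0 else v + N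

/-- canonical realization of the replacement `g[e₀/h]`, with fresh copies at offset `N`. -/
noncomputable def replOff (g : HRHypergraph L) (e₀ : ℕ) (h : HRHypergraph L) (N : ℕ) :
    HRHypergraph L where
  V := g.V ∪ h.V.image (rho g e₀ h N)
  E := g.E.erase e₀ ∪ h.E.image (· + N)
  att := fun x => if x ∈ h.E.image (· + N) then (h.att (x - N)).map (rho g e₀ h N) else g.att x
  lab := fun x => if x ∈ h.E.image (· + N) then h.lab (x - N) else g.lab x
  ext := g.ext

/-- freshness/compatibility conditions for the canonical replacement -/
structure Fresh (g : HRHypergraph L) (e₀ : ℕ) (h : HRHypergraph L) (N : ℕ) : Prop where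
  he₀ : e₀ ∈ g.E
  att_sub : ∀ v ∈ g.att e₀, v ∈ g.V
  att_nd : (g.att e₀).Nodup
  ext_sub : ∀ v ∈ h.ext, v ∈ h.V
  ext_nd : h.ext.Nodup
  len : h.ext.length = (g.att e₀).length
  hV : ∀ v ∈ h.V, v + N ∉ g.V
  hE : ∀ d ∈ h.E, d + N ∉ g.E

variable {g h : HRHypergraph L} {e₀ N : ℕ}

theorem rho_map_ext (F : Fresh g e₀ h N) : h.ext.map (rho g e₀ h N) = g.att e₀ := by
  have : ∀ v ∈ h.ext, rho g e₀ h N v = (g.att e₀).getD (h.ext.idxOf v) 0 := by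
    intro v hv; simp [rho, hv]
  rw [List.map_congr_left this]
  exact list_map_getD F.ext_nd F.len

theorem rho_mem_att (F : Fresh g e₀ h N) {v : ℕ} (hv : v ∈ h.ext) :
    rho g e₀ h N v ∈ g.att e₀ := by
  rw [← rho_map_ext F]; exact List.mem_map_of_mem hv

theorem rho_nonext (F : Fresh g e₀ h N) {v : ℕ} (hv : v ∉ h.ext) :
    rho g e₀ h N v = v + N := by simp [rho, hv]

theorem rho_injOn (F : Fresh g e₀ h N) : Set.InjOn (rho g e₀ h N) ↑h.V := by
  intro v₁ h₁ v₂ h₂ heq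
  by_cases e₁ : v₁ ∈ h.ext <;> by_cases e₂ : v₂ ∈ h.ext
  · simp only [rho, e₁, e₂, if_pos] at heq
    have i₁ : h.ext.idxOf v₁ < (g.att e₀).length := by
      rw [← F.len]; exact List.idxOf_lt_length_iff.mpr e₁
    have i₂ : h.ext.idxOf v₂ < (g.att e₀).length := by
      rw [← F.len]; exact List.idxOf_lt_length_iff.mpr e₂
    rw [List.getD_eq_getElem _ _ i₁, List.getD_eq_getElem _ _ i₂] at heq
    exact (List.idxOf_inj e₁).mp ((List.Nodup.getElem_inj_iff F.att_nd).mp heq)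
  · exfalso
    have hmem : rho g e₀ h N v₁ ∈ g.V := F.att_sub _ (rho_mem_att F e₁)
    rw [heq, rho_nonext F e₂] at hmem
    exact F.hV v₂ h₂ hmem
  · exfalso
    have hmem : rho g e₀ h N v₂ ∈ g.V := F.att_sub _ (rho_mem_att F e₂)
    rw [← heq, rho_nonext F e₁] at hmem
    exact F.hV v₁ h₁ hmem
  · rw [rho_nonext F e₁, rho_nonext F e₂] at heq; omega

theorem old_not_img (F : Fresh g e₀ h N) {x : ℕ} (hx : x ∈ g.E) :
    x ∉ h.E.image (· + N) := by
  intro hmem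
  obtain ⟨d, hd, rfl⟩ := Finset.mem_image.mp hmem
  exact F.hE d hd hx

theorem isRepl_replOff (F : Fresh g e₀ h N) : IsReplacement g e₀ h (replOff g e₀ h N) := by
  refine ⟨rho g e₀ h N, (· + N), rho_injOn F, fun a _ b _ hab => by simp only at hab; omega, ?_,
    rho_map_ext F, fun d hd => F.hE d hd, rfl, rfl, ?_, ?_, rfl⟩
  · intro v hv hne
    rw [rho_nonext F hne]; exact F.hV v hv
  · intro e he
    have hni : e ∉ h.E.image (· + N) := old_not_img F (Finset.mem_of_mem_erase he)
    exact ⟨if_neg hni, if_neg hni⟩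
  · intro e he
    have hpi : e + N ∈ h.E.image (· + N) := Finset.mem_image_of_mem _ he
    constructor
    · show (if e + N ∈ h.E.image (· + N) then (h.att (e + N - N)).map (rho g e₀ h N)
        else g.att (e + N)) = _
      rw [if_pos hpi, Nat.add_sub_cancel]
    · show (if e + N ∈ h.E.image (· + N) then h.lab (e + N - N) else g.lab (e + N)) = _
      rw [if_pos hpi, Nat.add_sub_cancel]

end HypAux

namespace HypAux

variable {L : Type}

/-- Replacement is compatible with isomorphism: any realization of `g[e₀/h]`
is isomorphic to any realization of `g₁[(fe e₀)/h]` whenever `(f, fe)` is an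
isomorphism from `g` to `g₁`. -/
theorem repl_iso {g g₁ h z z₁ : HRHypergraph L} (hokg : Ok g) (hokh : Ok h)
    {f fe : ℕ → ℕ}
    (hbV : Set.BijOn f ↑g.V ↑g₁.V) (hbE : Set.BijOn fe ↑g.E ↑g₁.E)
    (hatt : ∀ e ∈ g.E, g₁.att (fe e) = (g.att e).map f)
    (hlab : ∀ e ∈ g.E, g₁.lab (fe e) = g.lab e)
    (hext : g₁.ext = g.ext.map f)
    {e₀ : ℕ} (he₀ : e₀ ∈ g.E)
    (h1 : IsReplacement g e₀ h z) (h2 : IsReplacement g₁ (fe e₀) h z₁) :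
    z.Isomorphic z₁ := by
  obtain ⟨ρ, η, hρi, hηi, hρf, hρx, hηf, hVz, hEz, hold, hnew, hzx⟩ := h1
  obtain ⟨ρ', η', hρi', hηi', hρf', hρx', hηf', hVz', hEz', hold', hnew', hzx'⟩ := h2
  classical
  set F : ℕ → ℕ := fun w => if w ∈ g.V then f w else ρ' (Function.invFunOn ρ ↑h.V w) with hF
  set Fe : ℕ → ℕ := fun x => if x ∈ g.E then fe x else η' (Function.invFunOn η ↑h.E x) with hFe
  have hattsub : ∀ v ∈ g.att e₀, v ∈ g.V := (hokg.1 e₀ he₀).1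
  have hfe₀ : fe e₀ ∈ g₁.E := hbE.mapsTo he₀
  -- ρ of external nodes lands in g.V
  have hρext : ∀ v ∈ h.ext, ρ v ∈ g.V := by
    intro v hv
    exact hattsub _ (by rw [← hρx]; exact List.mem_map_of_mem hv)
  have hρ'ext : ∀ v ∈ h.ext, ρ' v ∈ g₁.V := by
    intro v hv
    have : ρ' v ∈ g₁.att (fe e₀) := by rw [← hρx']; exact List.mem_map_of_mem hv
    rw [hatt e₀ he₀] at this
    obtain ⟨u, hu, huv⟩ := List.mem_map.mp this
    rw [← huv]
    exact hbV.mapsTo (hattsub u hu)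
  -- compatibility on the copies
  have crho : ∀ v ∈ h.V, F (ρ v) = ρ' v := by
    intro v hv
    by_cases hvx : v ∈ h.ext
    · have hρvV : ρ v ∈ g.V := hρext v hvx
      have hmap : h.ext.map ρ' = h.ext.map (f ∘ ρ) := by
        rw [hρx', hatt e₀ he₀, ← hρx, List.map_map]
      have := (List.map_eq_map_iff.mp hmap) v hvx
      simp only [hF, if_pos hρvV]
      exact this.symm
    · have hρvV : ρ v ∉ g.V := hρf v hv hvx
      simp only [hF, if_neg hρvV]
      rw [hρi.leftInvOn_invFunOn hv]
  have ceta : ∀ d ∈ h.E, Fe (η d) = η' d := by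
    intro d hd
    have : η d ∉ g.E := hηf d hd
    simp only [hFe, if_neg this]
    rw [hηi.leftInvOn_invFunOn hd]
  -- dichotomies
  have zVcase : ∀ w ∈ z.V, w ∉ g.V → ∃ v ∈ h.V, v ∉ h.ext ∧ ρ v = w := by
    intro w hw hng
    rw [hVz] at hw
    rcases Finset.mem_union.mp hw with h' | h'
    · exact absurd h' hng
    · obtain ⟨v, hv, rfl⟩ := Finset.mem_image.mp h'
      exact ⟨v, hv, fun hvx => hng (hρext v hvx), rfl⟩
  have zVcase' : ∀ w ∈ z₁.V, w ∉ g₁.V → ∃ v ∈ h.V, v ∉ h.ext ∧ ρ' v = w := by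
    intro w hw hng
    rw [hVz'] at hw
    rcases Finset.mem_union.mp hw with h' | h'
    · exact absurd h' hng
    · obtain ⟨v, hv, rfl⟩ := Finset.mem_image.mp h'
      exact ⟨v, hv, fun hvx => hng (hρ'ext v hvx), rfl⟩
  have zEcase : ∀ x ∈ z.E, x ∈ g.E.erase e₀ ∨ (x ∉ g.E ∧ ∃ d ∈ h.E, η d = x) := by
    intro x hx
    rw [hEz] at hx
    rcases Finset.mem_union.mp hx with h' | h'
    · exact Or.inl h'
    · obtain ⟨d, hd, rfl⟩ := Finset.mem_image.mp h'
      exact Or.inr ⟨hηf d hd, d, hd, rfl⟩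
  have zEcase' : ∀ x ∈ z₁.E, x ∈ g₁.E.erase (fe e₀) ∨ (x ∉ g₁.E ∧ ∃ d ∈ h.E, η' d = x) := by
    intro x hx
    rw [hEz'] at hx
    rcases Finset.mem_union.mp hx with h' | h'
    · exact Or.inl h'
    · obtain ⟨d, hd, rfl⟩ := Finset.mem_image.mp h'
      exact Or.inr ⟨hηf' d hd, d, hd, rfl⟩
  have FgV : ∀ w, w ∈ g.V → F w = f w := by
    intro w hw; simp only [hF]; rw [if_pos hw]
  have FegE : ∀ x, x ∈ g.E → Fe x = fe x := by
    intro x hx; simp only [hFe]; rw [if_pos hx]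
  have hρmem : ∀ v ∈ h.V, ρ v ∈ z.V := by
    intro v hv; rw [hVz]
    exact Finset.mem_union_right _ (Finset.mem_image_of_mem _ hv)
  have hρ'mem : ∀ v ∈ h.V, ρ' v ∈ z₁.V := by
    intro v hv; rw [hVz']
    exact Finset.mem_union_right _ (Finset.mem_image_of_mem _ hv)
  refine ⟨F, Fe, ⟨?_, ?_, ?_⟩, ⟨?_, ?_, ?_⟩, ?_, ?_, ?_⟩
  -- MapsTo F
  · intro w hw
    by_cases hg : w ∈ g.V
    · rw [FgV w hg]
      have : f w ∈ g₁.V := hbV.mapsTo hg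
      rw [hVz']; exact Finset.mem_coe.mpr (Finset.mem_union_left _ this)
    · obtain ⟨v, hv, hvx, rfl⟩ := zVcase w hw hg
      rw [crho v hv]
      exact hρ'mem v hv
  -- InjOn F
  · intro w₁ hw₁ w₂ hw₂ heq
    by_cases hg₁ : w₁ ∈ g.V <;> by_cases hg₂ : w₂ ∈ g.V
    · rw [FgV w₁ hg₁, FgV w₂ hg₂] at heq
      exact hbV.injOn hg₁ hg₂ heq
    · obtain ⟨v, hv, hvx, rfl⟩ := zVcase w₂ hw₂ hg₂
      rw [crho v hv, FgV w₁ hg₁] at heq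
      exact absurd (heq ▸ hbV.mapsTo hg₁) (hρf' v hv hvx)
    · obtain ⟨v, hv, hvx, rfl⟩ := zVcase w₁ hw₁ hg₁
      rw [crho v hv, FgV w₂ hg₂] at heq
      exact absurd (heq.symm ▸ hbV.mapsTo hg₂) (hρf' v hv hvx)
    · obtain ⟨v₁, hv₁, hvx₁, rfl⟩ := zVcase w₁ hw₁ hg₁
      obtain ⟨v₂, hv₂, hvx₂, rfl⟩ := zVcase w₂ hw₂ hg₂
      rw [crho v₁ hv₁, crho v₂ hv₂] at heq
      rw [hρi' hv₁ hv₂ heq]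
  -- SurjOn F
  · intro w' hw'
    by_cases hg : w' ∈ g₁.V
    · obtain ⟨w, hw, rfl⟩ := hbV.surjOn hg
      refine ⟨w, ?_, FgV w hw⟩
      rw [hVz]; exact Finset.mem_coe.mpr (Finset.mem_union_left _ hw)
    · obtain ⟨v, hv, hvx, rfl⟩ := zVcase' w' hw' hg
      exact ⟨ρ v, hρmem v hv, crho v hv⟩
  -- MapsTo Fe
  · intro x hx
    rcases zEcase x hx with h' | ⟨hng, d, hd, rfl⟩
    · have hxE : x ∈ g.E := Finset.mem_of_mem_erase h'
      have hxne : x ≠ e₀ := Finset.ne_of_mem_erase h'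
      rw [FegE x hxE, hEz']
      refine Finset.mem_coe.mpr (Finset.mem_union_left _ (Finset.mem_erase.mpr ⟨?_, hbE.mapsTo hxE⟩))
      exact fun hc => hxne (hbE.injOn hxE he₀ hc)
    · rw [ceta d hd, hEz']
      exact Finset.mem_coe.mpr (Finset.mem_union_right _ (Finset.mem_image_of_mem _ hd))
  -- InjOn Fe
  · intro x₁ hx₁ x₂ hx₂ heq
    rcases zEcase x₁ hx₁ with h₁ | ⟨hng₁, d₁, hd₁, rfl⟩ <;>
      rcases zEcase x₂ hx₂ with h₂ | ⟨hng₂, d₂, hd₂, rfl⟩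
    · rw [FegE x₁ (Finset.mem_of_mem_erase h₁), FegE x₂ (Finset.mem_of_mem_erase h₂)] at heq
      exact hbE.injOn (Finset.mem_of_mem_erase h₁) (Finset.mem_of_mem_erase h₂) heq
    · rw [ceta d₂ hd₂, FegE x₁ (Finset.mem_of_mem_erase h₁)] at heq
      exact absurd (heq ▸ hbE.mapsTo (Finset.mem_of_mem_erase h₁)) (hηf' d₂ hd₂)
    · rw [ceta d₁ hd₁, FegE x₂ (Finset.mem_of_mem_erase h₂)] at heq
      exact absurd (heq.symm ▸ hbE.mapsTo (Finset.mem_of_mem_erase h₂)) (hηf' d₁ hd₁)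
    · rw [ceta d₁ hd₁, ceta d₂ hd₂] at heq
      rw [hηi' hd₁ hd₂ heq]
  -- SurjOn Fe
  · intro x' hx'
    rcases zEcase' x' hx' with h' | ⟨hng, d, hd, rfl⟩
    · have hxE : x' ∈ g₁.E := Finset.mem_of_mem_erase h'
      obtain ⟨x, hx, rfl⟩ := hbE.surjOn hxE
      have hxne : x ≠ e₀ := fun hc => (Finset.ne_of_mem_erase h') (by rw [hc])
      refine ⟨x, ?_, FegE x hx⟩
      rw [hEz]
      exact Finset.mem_coe.mpr (Finset.mem_union_left _ (Finset.mem_erase.mpr ⟨hxne, hx⟩))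
    · refine ⟨η d, ?_, ceta d hd⟩
      rw [hEz]
      exact Finset.mem_coe.mpr (Finset.mem_union_right _ (Finset.mem_image_of_mem _ hd))
  -- att
  · intro x hx
    rcases zEcase x hx with h' | ⟨hng, d, hd, rfl⟩
    · have hxE : x ∈ g.E := Finset.mem_of_mem_erase h'
      have hfex : fe x ∈ g₁.E.erase (fe e₀) := by
        refine Finset.mem_erase.mpr ⟨?_, hbE.mapsTo hxE⟩
        exact fun hc => (Finset.ne_of_mem_erase h') (hbE.injOn hxE he₀ hc)
      rw [FegE x hxE, (hold' (fe x) hfex).1, hatt x hxE, (hold x h').1]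
      apply List.map_congr_left
      intro u hu
      exact (FgV u ((hokg.1 x hxE).1 u hu)).symm
    · rw [ceta d hd, (hnew' d hd).1, (hnew d hd).1, List.map_map]
      apply List.map_congr_left
      intro u hu
      exact (crho u ((hokh.1 d hd).1 u hu)).symm
  -- lab
  · intro x hx
    rcases zEcase x hx with h' | ⟨hng, d, hd, rfl⟩
    · have hxE : x ∈ g.E := Finset.mem_of_mem_erase h'
      have hfex : fe x ∈ g₁.E.erase (fe e₀) := by
        refine Finset.mem_erase.mpr ⟨?_, hbE.mapsTo hxE⟩
        exact fun hc => (Finset.ne_of_mem_erase h') (hbE.injOn hxE he₀ hc)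
      rw [FegE x hxE, (hold' (fe x) hfex).2, hlab x hxE, (hold x h').2]
    · rw [ceta d hd, (hnew' d hd).2, (hnew d hd).2]
  -- ext
  · rw [hzx', hzx, hext]
    apply List.map_congr_left
    intro u hu
    exact (FgV u (hokg.2.1 u hu)).symm

/-- Two realizations of the same replacement are isomorphic. -/
theorem repl_unique {g h z z₁ : HRHypergraph L} (hokg : Ok g) (hokh : Ok h)
    {e₀ : ℕ} (he₀ : e₀ ∈ g.E)
    (h1 : IsReplacement g e₀ h z) (h2 : IsReplacement g e₀ h z₁) :
    z.Isomorphic z₁ :=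
  repl_iso hokg hokh (Set.bijOn_id _) (Set.bijOn_id _) (by simp) (by simp) (by simp) he₀ h1 h2

end HypAux

namespace HypAux

variable {L : Type}

theorem ok_repl {g h z : HRHypergraph L} (hokg : Ok g) (hokh : Ok h)
    {e₀ : ℕ} (h1 : IsReplacement g e₀ h z) : Ok z := by
  obtain ⟨ρ, η, hρi, hηi, hρf, hρx, hηf, hVz, hEz, hold, hnew, hzx⟩ := h1
  have hgsub : g.V ⊆ z.V := by rw [hVz]; exact Finset.subset_union_left
  refine ⟨?_, ?_, ?_⟩
  · intro x hx
    rw [hEz] at hx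
    rcases Finset.mem_union.mp hx with h' | h'
    · rw [(hold x h').1]
      have hxE : x ∈ g.E := Finset.mem_of_mem_erase h'
      exact ⟨fun v hv => hgsub ((hokg.1 x hxE).1 v hv), (hokg.1 x hxE).2⟩
    · obtain ⟨d, hd, rfl⟩ := Finset.mem_image.mp h'
      rw [(hnew d hd).1]
      constructor
      · intro v hv
        obtain ⟨u, hu, rfl⟩ := List.mem_map.mp hv
        rw [hVz]
        exact Finset.mem_union_right _
          (Finset.mem_image_of_mem _ ((hokh.1 d hd).1 u hu))
      · exact (hokh.1 d hd).2.map_on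
          (fun u hu u' hu' heq => hρi ((hokh.1 d hd).1 u hu) ((hokh.1 d hd).1 u' hu') heq)
  · intro v hv
    rw [hzx] at hv
    exact hgsub (hokg.2.1 v hv)
  · rw [hzx]; exact hokg.2.2

theorem wf_repl {rk : L → ℕ} {g h z : HRHypergraph L} (hg : g.WF rk) (hh : h.WF rk)
    {e₀ : ℕ} (h1 : IsReplacement g e₀ h z) : z.WF rk := by
  have hok := ok_repl (Ok.of_wf hg) (Ok.of_wf hh) h1
  obtain ⟨ρ, η, hρi, hηi, hρf, hρx, hηf, hVz, hEz, hold, hnew, hzx⟩ := h1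
  refine ⟨?_, ?_, hok.2.1, hok.2.2⟩
  · obtain ⟨v, hv⟩ := hg.1
    exact ⟨v, by rw [hVz]; exact Finset.mem_union_left _ hv⟩
  · intro x hx
    have hmem := hok.1 x (by exact hx)
    refine ⟨hmem.1, hmem.2, ?_, ?_⟩
    · rw [hEz] at hx
      rcases Finset.mem_union.mp hx with h' | h'
      · rw [(hold x h').1, (hold x h').2]
        exact (hg.2.1 x (Finset.mem_of_mem_erase h')).2.2.1
      · obtain ⟨d, hd, rfl⟩ := Finset.mem_image.mp h'
        rw [(hnew d hd).1, (hnew d hd).2, List.length_map]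
        exact (hh.2.1 d hd).2.2.1
    · rw [hEz] at hx
      rcases Finset.mem_union.mp hx with h' | h'
      · rw [(hold x h').1]
        exact (hg.2.1 x (Finset.mem_of_mem_erase h')).2.2.2
      · obtain ⟨d, hd, rfl⟩ := Finset.mem_image.mp h'
        rw [(hnew d hd).1]
        simpa using (hh.2.1 d hd).2.2.2

theorem sum_repl {g h z : HRHypergraph L} {e₀ : ℕ}
    (h1 : IsReplacement g e₀ h z) (w : ℕ → L → ℕ) :
    ∑ x ∈ z.E, w (z.att x).length (z.lab x) =
      ∑ x ∈ g.E.erase e₀, w (g.att x).length (g.lab x) +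
        ∑ d ∈ h.E, w (h.att d).length (h.lab d) := by
  obtain ⟨ρ, η, hρi, hηi, hρf, hρx, hηf, hVz, hEz, hold, hnew, hzx⟩ := h1
  have hdisj : Disjoint (g.E.erase e₀) (h.E.image η) := by
    rw [Finset.disjoint_left]
    intro x hx hmem
    obtain ⟨d, hd, rfl⟩ := Finset.mem_image.mp hmem
    exact hηf d hd (Finset.mem_of_mem_erase hx)
  have hsum : ∑ x ∈ z.E, w (z.att x).length (z.lab x) =
      ∑ x ∈ g.E.erase e₀, w (z.att x).length (z.lab x) +
        ∑ x ∈ h.E.image η, w (z.att x).length (z.lab x) := by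
    rw [hEz, Finset.sum_union hdisj]
  rw [hsum]
  congr 1
  · exact Finset.sum_congr rfl fun x hx => by rw [(hold x hx).1, (hold x hx).2]
  · rw [Finset.sum_image (fun a ha b hb hab => hηi ha hb hab)]
    exact Finset.sum_congr rfl fun d hd => by
      rw [(hnew d hd).1, (hnew d hd).2, List.length_map]

theorem cardV_repl {g h z : HRHypergraph L} (hokg : Ok g) {e₀ : ℕ} (he₀ : e₀ ∈ g.E)
    (hexts : ∀ v ∈ h.ext, v ∈ h.V) (hextnd : h.ext.Nodup)
    (h1 : IsReplacement g e₀ h z) :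
    z.V.card + h.ext.length = g.V.card + h.V.card := by
  obtain ⟨ρ, η, hρi, hηi, hρf, hρx, hηf, hVz, hEz, hold, hnew, hzx⟩ := h1
  have hρext : ∀ v ∈ h.ext, ρ v ∈ g.V := by
    intro v hv
    exact (hokg.1 e₀ he₀).1 _ (by rw [← hρx]; exact List.mem_map_of_mem hv)
  have hset : z.V = g.V ∪ (h.V.filter (· ∉ h.ext)).image ρ := by
    rw [hVz]
    apply Finset.ext
    intro w
    simp only [Finset.mem_union, Finset.mem_image, Finset.mem_filter]
    constructor
    · rintro (hw | ⟨v, hv, rfl⟩)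
      · exact Or.inl hw
      · by_cases hvx : v ∈ h.ext
        · exact Or.inl (hρext v hvx)
        · exact Or.inr ⟨v, ⟨hv, hvx⟩, rfl⟩
    · rintro (hw | ⟨v, ⟨hv, _⟩, rfl⟩)
      · exact Or.inl hw
      · exact Or.inr ⟨v, hv, rfl⟩
  have hdisj : Disjoint g.V ((h.V.filter (· ∉ h.ext)).image ρ) := by
    rw [Finset.disjoint_right]
    intro w hmem
    obtain ⟨v, hv, rfl⟩ := Finset.mem_image.mp hmem
    exact hρf v (Finset.mem_filter.mp hv).1 (by simpa using (Finset.mem_filter.mp hv).2)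
  have hcardi : ((h.V.filter (· ∉ h.ext)).image ρ).card = (h.V.filter (· ∉ h.ext)).card :=
    Finset.card_image_of_injOn fun a ha b hb hab =>
      hρi (Finset.mem_filter.mp ha).1 (Finset.mem_filter.mp hb).1 hab
  have hsplit : (h.V.filter (· ∈ h.ext)).card + (h.V.filter (· ∉ h.ext)).card = h.V.card :=
    Finset.card_filter_add_card_filter_not _
  have hextf : h.V.filter (· ∈ h.ext) = h.ext.toFinset := by
    apply Finset.ext
    intro v
    simp only [Finset.mem_filter, List.mem_toFinset]
    exact ⟨fun hp => hp.2, fun hp => ⟨hexts v hp, hp⟩⟩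
  have hextc : (h.ext.toFinset).card = h.ext.length := by
    rw [List.toFinset_card_of_nodup hextnd]
  rw [hextf, hextc] at hsplit
  rw [hset, Finset.card_union_of_disjoint hdisj, hcardi]
  omega

end HypAux

namespace HypAux

variable {L : Type}

theorem not_mem_of_sup_lt {s : Finset ℕ} {n : ℕ} (h : s.sup id < n) : n ∉ s := by
  intro hm
  have := Finset.le_sup (f := id) hm
  simp only [id] at this
  omega

/-- Lifting an inner replacement through an outer replacement:
if `z` realizes `x[e/h]` and `h₁` realizes `h[d/k]`, then applying the rule to
the copy `ed` of `d` inside `z` yields a realization of `x[e/h₁]`. -/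
theorem repl_lift {x h k z h₁ : HRHypergraph L}
    (hokh : Ok h) (hokk : Ok k)
    {e d : ℕ} (he : e ∈ x.E) (hd : d ∈ h.E)
    (h1 : IsReplacement x e h z) (h2 : IsReplacement h d k h₁) :
    ∃ ed z₁, ed ∈ z.E ∧ z.lab ed = h.lab d ∧
      IsReplacement z ed k z₁ ∧ IsReplacement x e h₁ z₁ := by
  classical
  obtain ⟨ρ, η, hρi, hηi, hρf, hρx, hηf, hVz, hEz, hold, hnew, hzx⟩ := h1
  obtain ⟨σ, τ, hσi, hτi, hσf, hσx, hτf, hVh, hEh, hold2, hnew2, hhx⟩ := h2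
  set ed := η d with hed
  have hedz : ed ∈ z.E := by
    rw [hEz]; exact Finset.mem_union_right _ (Finset.mem_image_of_mem _ hd)
  have hatted : z.att ed = (h.att d).map ρ := (hnew d hd).1
  have hlabed : z.lab ed = h.lab d := (hnew d hd).2
  have hattdV : ∀ v ∈ h.att d, v ∈ h.V := (hokh.1 d hd).1
  have hattdnd : (h.att d).Nodup := (hokh.1 d hd).2
  have hxVz : x.V ⊆ z.V := by rw [hVz]; exact Finset.subset_union_left
  have hxEz : x.E.erase e ⊆ z.E := by rw [hEz]; exact Finset.subset_union_left
  have hρVz : ∀ v ∈ h.V, ρ v ∈ z.V := by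
    intro v hv; rw [hVz]; exact Finset.mem_union_right _ (Finset.mem_image_of_mem _ hv)
  have hηEz : ∀ c ∈ h.E, η c ∈ z.E := by
    intro c hc; rw [hEz]; exact Finset.mem_union_right _ (Finset.mem_image_of_mem _ hc)
  set N := z.V.sup id + z.E.sup id + e + 1 with hN
  have hNV : z.V.sup id < N := by omega
  have hNE : z.E.sup id < N := by omega
  have hNe : e < N := by omega
  have F : Fresh z ed k N := by
    refine ⟨hedz, ?_, ?_, hokk.2.1, hokk.2.2, ?_, ?_, ?_⟩
    · intro v hv
      rw [hatted] at hv
      obtain ⟨u, hu, rfl⟩ := List.mem_map.mp hv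
      exact hρVz u (hattdV u hu)
    · rw [hatted]
      exact hattdnd.map_on fun u hu u' hu' heq => hρi (hattdV u hu) (hattdV u' hu') heq
    · rw [hatted, List.length_map]
      have := congrArg List.length hσx
      simpa using this
    · intro v _; exact not_mem_of_sup_lt (by omega)
    · intro c _; exact not_mem_of_sup_lt (by omega)
  set z₁ := replOff z ed k N with hz₁
  set ρ' := rho z ed k N with hρ'
  have h3 : IsReplacement z ed k z₁ := isRepl_replOff F
  have z1V : z₁.V = z.V ∪ k.V.image ρ' := rfl
  have z1E : z₁.E = z.E.erase ed ∪ k.E.image (· + N) := rfl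
  have z1ext : z₁.ext = z.ext := rfl
  have z1old : ∀ y, y ∈ z.E → z₁.att y = z.att y ∧ z₁.lab y = z.lab y := by
    intro y hy
    have hni : y ∉ k.E.image (· + N) := old_not_img F hy
    exact ⟨if_neg hni, if_neg hni⟩
  have z1new : ∀ c ∈ k.E, z₁.att (c + N) = (k.att c).map ρ' ∧ z₁.lab (c + N) = k.lab c := by
    intro c hc
    have hpi : c + N ∈ k.E.image (· + N) := Finset.mem_image_of_mem _ hc
    constructor
    · show (if c + N ∈ k.E.image (· + N) then (k.att (c + N - N)).map ρ' else z.att (c + N)) = _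
      rw [if_pos hpi, Nat.add_sub_cancel]
    · show (if c + N ∈ k.E.image (· + N) then k.lab (c + N - N) else z.lab (c + N)) = _
      rw [if_pos hpi, Nat.add_sub_cancel]
  have hρ'notzV : ∀ u, u ∉ k.ext → ρ' u ∉ z.V := by
    intro u hux
    rw [hρ', rho_nonext F hux]
    exact not_mem_of_sup_lt (by omega)
  have hη'notzE : ∀ c, (c + N) ∉ z.E := fun c => not_mem_of_sup_lt (by omega)
  have hη'notxE : ∀ c, (c + N) ∉ x.E := by
    intro c hc
    have hne : c + N ≠ e := by omega
    exact hη'notzE c (hxEz (Finset.mem_erase.mpr ⟨hne, hc⟩))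
  -- σ of external nodes of k lands in h.V
  have hσext : ∀ u ∈ k.ext, σ u ∈ h.V := by
    intro u hu
    exact hattdV _ (by rw [← hσx]; exact List.mem_map_of_mem hu)
  set P : ℕ → ℕ := fun v => if v ∈ h.V then ρ v else ρ' (Function.invFunOn σ ↑k.V v) with hP
  set Q : ℕ → ℕ := fun c => if c ∈ h.E then η c else (Function.invFunOn τ ↑k.E c) + N with hQ
  have PhV : ∀ v, v ∈ h.V → P v = ρ v := by
    intro v hv; simp only [hP]; rw [if_pos hv]
  have QhE : ∀ c, c ∈ h.E → Q c = η c := by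
    intro c hc; simp only [hQ]; rw [if_pos hc]
  have cσ : ∀ u ∈ k.V, P (σ u) = ρ' u := by
    intro u hu
    by_cases hux : u ∈ k.ext
    · rw [PhV _ (hσext u hux), hρ']
      have hmap : k.ext.map (rho z ed k N) = k.ext.map (ρ ∘ σ) := by
        rw [rho_map_ext F, hatted, ← hσx, List.map_map]
      exact ((List.map_eq_map_iff.mp hmap) u hux).symm
    · have : σ u ∉ h.V := hσf u hu hux
      simp only [hP, if_neg this]
      rw [hσi.leftInvOn_invFunOn hu]
  have cτ : ∀ c ∈ k.E, Q (τ c) = c + N := by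
    intro c hc
    have : τ c ∉ h.E := hτf c hc
    simp only [hQ, if_neg this]
    rw [hτi.leftInvOn_invFunOn hc]
  have h1Vcase : ∀ v ∈ h₁.V, v ∈ h.V ∨ (v ∉ h.V ∧ ∃ u ∈ k.V, u ∉ k.ext ∧ σ u = v) := by
    intro v hv
    by_cases hvh : v ∈ h.V
    · exact Or.inl hvh
    · rw [hVh] at hv
      rcases Finset.mem_union.mp hv with h' | h'
      · exact absurd h' hvh
      · obtain ⟨u, hu, rfl⟩ := Finset.mem_image.mp h'
        exact Or.inr ⟨hvh, u, hu, fun hux => hvh (hσext u hux), rfl⟩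
  have h1Ecase : ∀ c ∈ h₁.E, c ∈ h.E.erase d ∨ (c ∉ h.E ∧ ∃ c' ∈ k.E, τ c' = c) := by
    intro c hc
    rw [hEh] at hc
    rcases Finset.mem_union.mp hc with h' | h'
    · exact Or.inl h'
    · obtain ⟨c', hc', rfl⟩ := Finset.mem_image.mp h'
      exact Or.inr ⟨hτf c' hc', c', hc', rfl⟩
  refine ⟨ed, z₁, hedz, hlabed, h3, P, Q, ?_, ?_, ?_, ?_, ?_, ?_, ?_, ?_, ?_, ?_⟩
  -- InjOn P
  · intro v₁ hv₁ v₂ hv₂ heq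
    rcases h1Vcase v₁ hv₁ with hc₁ | ⟨hn₁, u₁, hu₁, hux₁, rfl⟩ <;>
      rcases h1Vcase v₂ hv₂ with hc₂ | ⟨hn₂, u₂, hu₂, hux₂, rfl⟩
    · rw [PhV _ hc₁, PhV _ hc₂] at heq
      exact hρi hc₁ hc₂ heq
    · rw [PhV _ hc₁, cσ u₂ hu₂] at heq
      exact absurd (heq ▸ hρVz v₁ hc₁) (hρ'notzV u₂ hux₂)
    · rw [PhV _ hc₂, cσ u₁ hu₁] at heq
      exact absurd (heq.symm ▸ hρVz v₂ hc₂) (hρ'notzV u₁ hux₁)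
    · rw [cσ u₁ hu₁, cσ u₂ hu₂, hρ'] at heq
      rw [rho_injOn F hu₁ hu₂ heq]
  -- InjOn Q
  · intro c₁ hc₁ c₂ hc₂ heq
    rcases h1Ecase c₁ hc₁ with hc₁' | ⟨hn₁, c₁', hc₁', rfl⟩ <;>
      rcases h1Ecase c₂ hc₂ with hc₂' | ⟨hn₂, c₂', hc₂', rfl⟩
    · rw [QhE _ (Finset.mem_of_mem_erase hc₁'), QhE _ (Finset.mem_of_mem_erase hc₂')] at heq
      exact hηi (Finset.mem_of_mem_erase hc₁') (Finset.mem_of_mem_erase hc₂') heq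
    · rw [QhE _ (Finset.mem_of_mem_erase hc₁'), cτ c₂' hc₂'] at heq
      exact absurd (heq ▸ hηEz c₁ (Finset.mem_of_mem_erase hc₁')) (hη'notzE c₂')
    · rw [QhE _ (Finset.mem_of_mem_erase hc₂'), cτ c₁' hc₁'] at heq
      exact absurd (heq.symm ▸ hηEz c₂ (Finset.mem_of_mem_erase hc₂')) (hη'notzE c₁')
    · rw [cτ c₁' hc₁', cτ c₂' hc₂'] at heq
      have : c₁' = c₂' := by omega
      rw [this]
  -- freshness of P w.r.t. x.V
  · intro v hv hvx
    rw [hhx] at hvx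
    rcases h1Vcase v hv with hc | ⟨hn, u, hu, hux, rfl⟩
    · rw [PhV _ hc]
      exact hρf v hc hvx
    · rw [cσ u hu]
      exact fun hmem => (hρ'notzV u hux) (hxVz hmem)
  -- external nodes map to attachment of e
  · rw [hhx, ← hρx]
    apply List.map_congr_left
    intro v hv
    exact PhV _ (hokh.2.1 v hv)
  -- freshness of Q w.r.t. x.E
  · intro c hc
    rcases h1Ecase c hc with hc' | ⟨hn, c', hc', rfl⟩
    · rw [QhE _ (Finset.mem_of_mem_erase hc')]
      exact hηf c (Finset.mem_of_mem_erase hc')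
    · rw [cτ c' hc']
      exact hη'notxE c'
  -- V equation
  · rw [z1V, hVz, hVh, Finset.image_union, Finset.image_image]
    have e1 : h.V.image P = h.V.image ρ :=
      Finset.image_congr fun v hv => PhV v hv
    have e2 : k.V.image (P ∘ σ) = k.V.image ρ' :=
      Finset.image_congr fun u hu => cσ u hu
    rw [e1, e2, Finset.union_assoc]
  -- E equation
  · rw [z1E, hEz, hEh, Finset.image_union, Finset.image_image]
    have e1 : (h.E.erase d).image Q = (h.E.erase d).image η :=
      Finset.image_congr fun c hc => QhE c (Finset.mem_of_mem_erase hc)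
    have e2 : k.E.image (Q ∘ τ) = k.E.image (· + N) :=
      Finset.image_congr fun c hc => cτ c hc
    rw [e1, e2, Finset.erase_union_distrib]
    have e3 : (x.E.erase e).erase ed = x.E.erase e := by
      apply Finset.erase_eq_of_notMem
      intro hmem
      exact hηf d hd (Finset.mem_of_mem_erase hmem)
    have e4 : (h.E.image η).erase ed = (h.E.erase d).image η := by
      apply Finset.ext
      intro y
      simp only [Finset.mem_erase, Finset.mem_image]
      constructor
      · rintro ⟨hne, c, hc, rfl⟩
        exact ⟨c, ⟨fun hcd => hne (by rw [hcd]), hc⟩, rfl⟩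
      · rintro ⟨c, ⟨hcd, hc⟩, rfl⟩
        exact ⟨fun hhc => hcd (hηi hc hd hhc), c, hc, rfl⟩
    rw [e3, e4, Finset.union_assoc]
  -- old x-edges
  · intro e' he'
    have he'z : e' ∈ z.E := hxEz he'
    have := z1old e' he'z
    rw [this.1, this.2]
    exact ⟨(hold e' he').1, (hold e' he').2⟩
  -- attachments and labels of the copy of h₁
  · intro c hc
    rcases h1Ecase c hc with hc' | ⟨hn, c', hc', rfl⟩
    · have hcE : c ∈ h.E := Finset.mem_of_mem_erase hc'
      rw [QhE _ hcE]
      have hz := z1old (η c) (hηEz c hcE)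
      rw [hz.1, hz.2, (hnew c hcE).1, (hnew c hcE).2,
        (hold2 c hc').1, (hold2 c hc').2]
      constructor
      · apply List.map_congr_left
        intro u hu
        exact (PhV u ((hokh.1 c hcE).1 u hu)).symm
      · rfl
    · rw [cτ c' hc']
      have hz := z1new c' hc'
      rw [hz.1, hz.2, (hnew2 c' hc').1, (hnew2 c' hc').2, List.map_map]
      constructor
      · apply List.map_congr_left
        intro u hu
        exact (cσ u ((hokk.1 c' hc').1 u hu)).symm
      · rfl
  -- external nodes
  · rw [z1ext, hzx]

end HypAux

namespace GramAux
open HypAux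

variable {T : Type} {rkT : T → ℕ} {G : HRGrammar T}

/-- invariant for graphs derived in `G` -/
def Good (G : HRGrammar T) (rkT : T → ℕ) (g : HRHypergraph (T ⊕ ℕ)) : Prop :=
  g.WF (G.rk rkT) ∧ ∀ e ∈ g.E, ∀ B : ℕ, g.lab e = Sum.inr B → B ∈ G.NT

theorem good_S (hWF : G.WF rkT) : Good G rkT G.S :=
  ⟨hWF.2.2.1, hWF.2.2.2.2.1⟩

theorem good_rhs (hWF : G.WF rkT) {B : ℕ} (hB : B ∈ G.NT) : Good G rkT (G.rhs B) :=
  ⟨(hWF.2.2.2.1 B hB).1, hWF.2.2.2.2.2 B hB⟩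

theorem att_len_good {g : HRHypergraph (T ⊕ ℕ)} (hg : Good G rkT g) {e B : ℕ}
    (he : e ∈ g.E) (hlab : g.lab e = Sum.inr B) : (g.att e).length = G.rkN B := by
  have := (hg.1.2.1 e he).2.2.1
  rw [this, hlab]
  rfl

theorem exists_repl (hWF : G.WF rkT) {g : HRHypergraph (T ⊕ ℕ)} {e B : ℕ}
    (he : e ∈ g.E) (hnd : (g.att e).Nodup) (hsub : ∀ v ∈ g.att e, v ∈ g.V)
    (hlen : (g.att e).length = G.rkN B) (hB : B ∈ G.NT) :
    ∃ z, IsReplacement g e (G.rhs B) z := by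
  have hrhs := hWF.2.2.2.1 B hB
  have F : Fresh g e (G.rhs B) (g.V.sup id + g.E.sup id + 1) := by
    refine ⟨he, hsub, hnd, hrhs.1.2.2.1, hrhs.1.2.2.2, by rw [hlen, hrhs.2], ?_, ?_⟩
    · intro v _; exact not_mem_of_sup_lt (by omega)
    · intro d _; exact not_mem_of_sup_lt (by omega)
  exact ⟨_, isRepl_replOff F⟩

theorem repl_good (hWF : G.WF rkT) {g z : HRHypergraph (T ⊕ ℕ)} (hg : Good G rkT g)
    {e B : ℕ} (hB : B ∈ G.NT)
    (hrep : IsReplacement g e (G.rhs B) z) : Good G rkT z := by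
  have hwf : z.WF (G.rk rkT) := wf_repl hg.1 (hWF.2.2.2.1 B hB).1 hrep
  obtain ⟨ρ, η, hρi, hηi, hρf, hρx, hηf, hVz, hEz, hold, hnew, hzx⟩ := hrep
  refine ⟨hwf, ?_⟩
  intro x hx C hC
  rw [hEz] at hx
  rcases Finset.mem_union.mp hx with h' | h'
  · rw [(hold x h').2] at hC
    exact hg.2 x (Finset.mem_of_mem_erase h') C hC
  · obtain ⟨d, hd, rfl⟩ := Finset.mem_image.mp h'
    rw [(hnew d hd).2] at hC
    exact hWF.2.2.2.2.2 B hB d hd C hC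

theorem derive_good (hWF : G.WF rkT) {g z : HRHypergraph (T ⊕ ℕ)} (hg : Good G rkT g)
    (hstep : G.Derive g z) : Good G rkT z := by
  obtain ⟨e, he, B, hB, hlab, hrep⟩ := hstep
  exact repl_good hWF hg hB hrep

theorem rt_good (hWF : G.WF rkT) {g z : HRHypergraph (T ⊕ ℕ)} (hg : Good G rkT g)
    (hrt : Relation.ReflTransGen G.Derive g z) : Good G rkT z := by
  induction hrt with
  | refl => exact hg
  | tail _ hstep ih => exact derive_good hWF ih hstep

/-- transporting a derivation step along an isomorphism -/
theorem derive_iso (hWF : G.WF rkT) {a b z : HRHypergraph (T ⊕ ℕ)}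
    (hga : Good G rkT a) (hiso : a.Isomorphic b) (hstep : G.Derive a z) :
    ∃ z', G.Derive b z' ∧ z.Isomorphic z' := by
  obtain ⟨f, fe, hbV, hbE, hatt, hlab, hext⟩ := hiso
  obtain ⟨e, he, B, hB, hlabe, hrep⟩ := hstep
  have hfeE : fe e ∈ b.E := hbE.mapsTo he
  have hlabb : b.lab (fe e) = Sum.inr B := by rw [hlab e he, hlabe]
  have hattb : b.att (fe e) = (a.att e).map f := hatt e he
  have hnd : (b.att (fe e)).Nodup := by
    rw [hattb]
    exact (hga.1.2.1 e he).2.1.map_on fun u hu u' hu' heq =>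
      hbV.injOn ((hga.1.2.1 e he).1 u hu) ((hga.1.2.1 e he).1 u' hu') heq
  have hsub : ∀ v ∈ b.att (fe e), v ∈ b.V := by
    intro v hv
    rw [hattb] at hv
    obtain ⟨u, hu, rfl⟩ := List.mem_map.mp hv
    exact hbV.mapsTo ((hga.1.2.1 e he).1 u hu)
  have hlen : (b.att (fe e)).length = G.rkN B := by
    rw [hattb, List.length_map]
    exact att_len_good hga he hlabe
  obtain ⟨z', hrep'⟩ := exists_repl hWF hfeE hnd hsub hlen hB
  refine ⟨z', ⟨fe e, hfeE, B, hB, hlabb, hrep'⟩, ?_⟩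
  exact repl_iso (Ok.of_wf hga.1) (Ok.of_wf (hWF.2.2.2.1 B hB).1)
    hbV hbE hatt hlab hext he hrep hrep'

theorem rt_derive_iso (hWF : G.WF rkT) {a b u : HRHypergraph (T ⊕ ℕ)}
    (hga : Good G rkT a) (hiso : a.Isomorphic b)
    (hrt : Relation.ReflTransGen G.Derive a u) :
    ∃ u', Relation.ReflTransGen G.Derive b u' ∧ u.Isomorphic u' := by
  induction hrt with
  | refl => exact ⟨b, Relation.ReflTransGen.refl, hiso⟩
  | @tail c u hrt hstep ih =>
      obtain ⟨c', hrt', hic⟩ := ih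
      have hgc : Good G rkT c := rt_good hWF hga hrt
      obtain ⟨u', hstep', hiu⟩ := derive_iso hWF hgc hic hstep
      exact ⟨u', hrt'.tail hstep', hiu⟩

theorem terminal_no_step {g z : HRHypergraph (T ⊕ ℕ)} (ht : HRGrammar.Terminal g)
    (hstep : G.Derive g z) : False := by
  obtain ⟨e, he, B, hB, hlabe, _⟩ := hstep
  obtain ⟨a, ha⟩ := ht e he
  rw [ha] at hlabe
  exact Sum.inl_ne_inr hlabe

end GramAux

namespace GramAux
open HypAux

variable {T : Type} {rkT : T → ℕ} {G : HRGrammar T}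

noncomputable def htN (G : HRGrammar T) (B : ℕ) : ℕ :=
  (G.NT.filter fun C => Relation.TransGen G.dep B C).card

theorem htN_lt (hacyc : ∀ A : ℕ, ¬ Relation.TransGen G.dep A A) {B C : ℕ}
    (hdep : G.dep B C) : htN G C < htN G B := by
  apply Finset.card_lt_card
  have hsub : (G.NT.filter fun D => Relation.TransGen G.dep C D) ⊆
      (G.NT.filter fun D => Relation.TransGen G.dep B D) := by
    intro x hx
    rw [Finset.mem_filter] at hx ⊢
    exact ⟨hx.1, hx.2.head hdep⟩
  rw [Finset.ssubset_iff_of_subset hsub]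
  refine ⟨C, ?_, ?_⟩
  · rw [Finset.mem_filter]
    exact ⟨hdep.2.1, Relation.TransGen.single hdep⟩
  · rw [Finset.mem_filter]
    rintro ⟨-, hcc⟩
    exact hacyc C hcc

noncomputable def MM (G : HRGrammar T) : ℕ := ∑ B ∈ G.NT, (G.rhs B).E.card

noncomputable def wlab (G : HRGrammar T) : T ⊕ ℕ → ℕ :=
  Sum.elim (fun _ => 0) (fun B => (MM G + 1) ^ htN G B)

noncomputable def weight (G : HRGrammar T) (g : HRHypergraph (T ⊕ ℕ)) : ℕ :=
  ∑ x ∈ g.E, wlab G (g.lab x)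

theorem rhs_sum_lt (hWF : G.WF rkT) (hacyc : ∀ A : ℕ, ¬ Relation.TransGen G.dep A A)
    {B : ℕ} (hB : B ∈ G.NT) :
    ∑ d ∈ (G.rhs B).E, wlab G ((G.rhs B).lab d) < (MM G + 1) ^ htN G B := by
  by_cases hz : ∀ d ∈ (G.rhs B).E, wlab G ((G.rhs B).lab d) = 0
  · rw [Finset.sum_eq_zero hz]
    exact Nat.pow_pos (by omega)
  · push_neg at hz
    obtain ⟨d₀, hd₀, hne⟩ := hz
    have hB1 : 1 ≤ htN G B := by
      rcases hl : (G.rhs B).lab d₀ with a | C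
      · exact absurd (by rw [hl]; rfl) hne
      · have hC : C ∈ G.NT := hWF.2.2.2.2.2 B hB d₀ hd₀ C hl
        have := htN_lt hacyc ⟨hB, hC, d₀, hd₀, hl⟩
        omega
    set p := (MM G + 1) ^ (htN G B - 1) with hp
    have hppos : 0 < p := Nat.pow_pos (by omega)
    have hterm : ∀ d ∈ (G.rhs B).E, wlab G ((G.rhs B).lab d) ≤ p := by
      intro d hd
      rcases hl : (G.rhs B).lab d with a | C
      · simp [wlab]
      · have hC : C ∈ G.NT := hWF.2.2.2.2.2 B hB d hd C hl
        have hlt := htN_lt hacyc ⟨hB, hC, d, hd, hl⟩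
        show (MM G + 1) ^ htN G C ≤ p
        rw [hp]
        exact Nat.pow_le_pow_right (by omega) (by omega)
    have h1 : ∑ d ∈ (G.rhs B).E, wlab G ((G.rhs B).lab d) ≤ (G.rhs B).E.card * p := by
      simpa [smul_eq_mul] using Finset.sum_le_card_nsmul _ _ p hterm
    have hcard : (G.rhs B).E.card ≤ MM G :=
      Finset.single_le_sum (f := fun C => (G.rhs C).E.card) (fun i _ => Nat.zero_le _) hB
    have h2 : (G.rhs B).E.card * p ≤ MM G * p := Nat.mul_le_mul_right p hcard
    have h3 : MM G * p < (MM G + 1) * p := (Nat.mul_lt_mul_right hppos).mpr (by omega)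
    have h4 : (MM G + 1) ^ htN G B = p * (MM G + 1) := by
      rw [hp, ← pow_succ]
      congr 1
      omega
    rw [h4, mul_comm p]
    omega

theorem weight_step (hWF : G.WF rkT) (hacyc : ∀ A : ℕ, ¬ Relation.TransGen G.dep A A)
    {g z : HRHypergraph (T ⊕ ℕ)} {e B : ℕ} (he : e ∈ g.E)
    (hlab : g.lab e = Sum.inr B) (hB : B ∈ G.NT)
    (hrep : IsReplacement g e (G.rhs B) z) :
    weight G z < weight G g := by
  have h1 : ∑ x ∈ z.E, wlab G (z.lab x) =
      ∑ x ∈ g.E.erase e, wlab G (g.lab x) +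
        ∑ d ∈ (G.rhs B).E, wlab G ((G.rhs B).lab d) := by
    simpa using sum_repl hrep fun _ ℓ => wlab G ℓ
  have h2 : ∑ x ∈ g.E.erase e, wlab G (g.lab x) + wlab G (g.lab e) =
      ∑ x ∈ g.E, wlab G (g.lab x) := Finset.sum_erase_add g.E _ he
  have h3 := rhs_sum_lt hWF hacyc hB
  have h4 : wlab G (g.lab e) = (MM G + 1) ^ htN G B := by rw [hlab]; rfl
  unfold weight
  omega

theorem weight_derive (hWF : G.WF rkT) (hacyc : ∀ A : ℕ, ¬ Relation.TransGen G.dep A A)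
    {g z : HRHypergraph (T ⊕ ℕ)} (hstep : G.Derive g z) : weight G z < weight G g := by
  obtain ⟨e, he, B, hB, hlab, hrep⟩ := hstep
  exact weight_step hWF hacyc he hlab hB hrep

theorem normalize (hWF : G.WF rkT) (hacyc : ∀ A : ℕ, ¬ Relation.TransGen G.dep A A) :
    ∀ n (g : HRHypergraph (T ⊕ ℕ)), weight G g ≤ n → Good G rkT g →
      ∃ t, Relation.ReflTransGen G.Derive g t ∧ HRGrammar.Terminal t := by
  intro n
  induction n using Nat.strong_induction_on with
  | _ n ih =>
    intro g hw hg
    by_cases hterm : HRGrammar.Terminal g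
    · exact ⟨g, Relation.ReflTransGen.refl, hterm⟩
    · simp only [HRGrammar.Terminal, not_forall] at hterm
      obtain ⟨e, he, hne⟩ := hterm
      rcases hl : g.lab e with a | B
      · exact absurd ⟨a, hl⟩ hne
      · have hB : B ∈ G.NT := hg.2 e he B hl
        obtain ⟨z, hrep⟩ := exists_repl hWF he (hg.1.2.1 e he).2.1 (hg.1.2.1 e he).1
          (att_len_good hg he hl) hB
        have hstep : G.Derive g z := ⟨e, he, B, hB, hl, hrep⟩
        have hwz : weight G z < weight G g := weight_step hWF hacyc he hl hB hrep
        obtain ⟨t, hrt, ht⟩ := ih (weight G z) (by omega) z le_rfl (derive_good hWF hg hstep)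
        exact ⟨t, Relation.ReflTransGen.head hstep hrt, ht⟩

end GramAux

namespace GramAux
open HypAux

theorem hyp_eq {L : Type} {g₁ g₂ : HRHypergraph L} (hV : g₁.V = g₂.V) (hE : g₁.E = g₂.E)
    (hatt : g₁.att = g₂.att) (hlab : g₁.lab = g₂.lab) (hext : g₁.ext = g₂.ext) :
    g₁ = g₂ := by
  cases g₁; cases g₂
  dsimp at hV hE hatt hlab hext
  subst hV; subst hE; subst hatt; subst hlab; subst hext
  rfl

variable {T : Type} {rkT : T → ℕ} {G : HRGrammar T}

theorem commute (hWF : G.WF rkT) {g z₁ z₂ : HRHypergraph (T ⊕ ℕ)} {e₁ e₂ B₁ B₂ : ℕ}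
    (hg : Good G rkT g)
    (he₁ : e₁ ∈ g.E) (hl₁ : g.lab e₁ = Sum.inr B₁) (hB₁ : B₁ ∈ G.NT)
    (hrep₁ : IsReplacement g e₁ (G.rhs B₁) z₁)
    (he₂ : e₂ ∈ g.E) (hl₂ : g.lab e₂ = Sum.inr B₂) (hB₂ : B₂ ∈ G.NT)
    (hrep₂ : IsReplacement g e₂ (G.rhs B₂) z₂)
    (hne : e₁ ≠ e₂) :
    ∃ w₁ w₂, G.Derive z₁ w₁ ∧ G.Derive z₂ w₂ ∧ w₁.Isomorphic w₂ := by
  classical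
  set h₁ := G.rhs B₁ with hh₁
  set h₂ := G.rhs B₂ with hh₂
  have hokg : Ok g := Ok.of_wf hg.1
  have hwf₁ : h₁.WF (G.rk rkT) := (hWF.2.2.2.1 B₁ hB₁).1
  have hwf₂ : h₂.WF (G.rk rkT) := (hWF.2.2.2.1 B₂ hB₂).1
  have hok₁ : Ok h₁ := Ok.of_wf hwf₁
  have hok₂ : Ok h₂ := Ok.of_wf hwf₂
  set N := g.V.sup id + g.E.sup id + h₁.V.sup id + h₁.E.sup id + 1 with hN
  have hgV : ∀ y ∈ g.V, y < N := by
    intro y hy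
    have := Finset.le_sup (f := id) hy
    simp only [id] at this
    omega
  have hgE : ∀ y ∈ g.E, y < N := by
    intro y hy
    have := Finset.le_sup (f := id) hy
    simp only [id] at this
    omega
  have hh₁V : ∀ y ∈ h₁.V, y < N := by
    intro y hy
    have := Finset.le_sup (f := id) hy
    simp only [id] at this
    omega
  have hh₁E : ∀ y ∈ h₁.E, y < N := by
    intro y hy
    have := Finset.le_sup (f := id) hy
    simp only [id] at this
    omega
  have hlen₁ : h₁.ext.length = (g.att e₁).length := by
    rw [att_len_good hg he₁ hl₁, (hWF.2.2.2.1 B₁ hB₁).2]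
  have hlen₂ : h₂.ext.length = (g.att e₂).length := by
    rw [att_len_good hg he₂ hl₂, (hWF.2.2.2.1 B₂ hB₂).2]
  have F₁ : Fresh g e₁ h₁ N := by
    refine ⟨he₁, (hg.1.2.1 e₁ he₁).1, (hg.1.2.1 e₁ he₁).2.1, hok₁.2.1, hok₁.2.2, hlen₁, ?_, ?_⟩
    · intro v _ hmem; exact absurd (hgV _ hmem) (by omega)
    · intro d _ hmem; exact absurd (hgE _ hmem) (by omega)
  have F₂ : Fresh g e₂ h₂ (2 * N) := by
    refine ⟨he₂, (hg.1.2.1 e₂ he₂).1, (hg.1.2.1 e₂ he₂).2.1, hok₂.2.1, hok₂.2.2, hlen₂, ?_, ?_⟩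
    · intro v _ hmem; exact absurd (hgV _ hmem) (by omega)
    · intro d _ hmem; exact absurd (hgE _ hmem) (by omega)
  set c₁ := replOff g e₁ h₁ N with hc₁def
  set c₂ := replOff g e₂ h₂ (2 * N) with hc₂def
  have r₁ : IsReplacement g e₁ h₁ c₁ := isRepl_replOff F₁
  have r₂ : IsReplacement g e₂ h₂ c₂ := isRepl_replOff F₂
  -- bounds on the nodes/edges of c₁ and c₂
  have hc₁V : ∀ y ∈ c₁.V, y < 2 * N := by
    intro y hy
    rcases Finset.mem_union.mp hy with h' | h'
    · have := hgV y h'; omega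
    · obtain ⟨v, hv, rfl⟩ := Finset.mem_image.mp h'
      by_cases hvx : v ∈ h₁.ext
      · have := hgV _ (F₁.att_sub _ (rho_mem_att F₁ hvx)); omega
      · rw [rho_nonext F₁ hvx]
        have := hh₁V v hv; omega
  have hc₁E : ∀ y ∈ c₁.E, y < 2 * N := by
    intro y hy
    rcases Finset.mem_union.mp hy with h' | h'
    · have := hgE y (Finset.mem_of_mem_erase h'); omega
    · obtain ⟨d, hd, rfl⟩ := Finset.mem_image.mp h'
      have := hh₁E d hd
      show d + N < 2 * N
      omega
  have hc₂Vshape : ∀ y ∈ c₂.V, y < N ∨ 2 * N ≤ y := by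
    intro y hy
    rcases Finset.mem_union.mp hy with h' | h'
    · exact Or.inl (hgV y h')
    · obtain ⟨v, hv, rfl⟩ := Finset.mem_image.mp h'
      by_cases hvx : v ∈ h₂.ext
      · exact Or.inl (hgV _ (F₂.att_sub _ (rho_mem_att F₂ hvx)))
      · rw [rho_nonext F₂ hvx]; omega
  have hc₂Eshape : ∀ y ∈ c₂.E, y < N ∨ 2 * N ≤ y := by
    intro y hy
    rcases Finset.mem_union.mp hy with h' | h'
    · exact Or.inl (hgE y (Finset.mem_of_mem_erase h'))
    · obtain ⟨d, hd, rfl⟩ := Finset.mem_image.mp h'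
      right
      show 2 * N ≤ d + 2 * N
      omega
  -- e₂ in c₁, e₁ in c₂, with preserved attachment and labels
  have he₂c₁ : e₂ ∈ c₁.E :=
    Finset.mem_union_left _ (Finset.mem_erase.mpr ⟨fun hc => hne hc.symm, he₂⟩)
  have he₁c₂ : e₁ ∈ c₂.E :=
    Finset.mem_union_left _ (Finset.mem_erase.mpr ⟨hne, he₁⟩)
  have hc₁atte₂ : c₁.att e₂ = g.att e₂ := if_neg (old_not_img F₁ he₂)
  have hc₁labe₂ : c₁.lab e₂ = g.lab e₂ := if_neg (old_not_img F₁ he₂)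
  have hc₂atte₁ : c₂.att e₁ = g.att e₁ := if_neg (old_not_img F₂ he₁)
  have hc₂labe₁ : c₂.lab e₁ = g.lab e₁ := if_neg (old_not_img F₂ he₁)
  have F₁₂ : Fresh c₁ e₂ h₂ (2 * N) := by
    refine ⟨he₂c₁, ?_, ?_, hok₂.2.1, hok₂.2.2, ?_, ?_, ?_⟩
    · intro v hv
      rw [hc₁atte₂] at hv
      exact Finset.mem_union_left _ ((hg.1.2.1 e₂ he₂).1 v hv)
    · rw [hc₁atte₂]; exact (hg.1.2.1 e₂ he₂).2.1
    · rw [hc₁atte₂]; exact hlen₂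
    · intro v _ hmem; exact absurd (hc₁V _ hmem) (by omega)
    · intro d _ hmem; exact absurd (hc₁E _ hmem) (by omega)
  have F₂₁ : Fresh c₂ e₁ h₁ N := by
    refine ⟨he₁c₂, ?_, ?_, hok₁.2.1, hok₁.2.2, ?_, ?_, ?_⟩
    · intro v hv
      rw [hc₂atte₁] at hv
      exact Finset.mem_union_left _ ((hg.1.2.1 e₁ he₁).1 v hv)
    · rw [hc₂atte₁]; exact (hg.1.2.1 e₁ he₁).2.1
    · rw [hc₂atte₁]; exact hlen₁
    · intro v hv hmem
      rcases hc₂Vshape _ hmem with h' | h'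
      · omega
      · have := hh₁V v hv; omega
    · intro d hd hmem
      rcases hc₂Eshape _ hmem with h' | h'
      · omega
      · have := hh₁E d hd; omega
  set w := replOff c₁ e₂ h₂ (2 * N) with hwdef
  set w' := replOff c₂ e₁ h₁ N with hw'def
  have r₁₂ : IsReplacement c₁ e₂ h₂ w := isRepl_replOff F₁₂
  have r₂₁ : IsReplacement c₂ e₁ h₁ w' := isRepl_replOff F₂₁
  -- renamings coincide
  have hrho₂ : rho c₁ e₂ h₂ (2 * N) = rho g e₂ h₂ (2 * N) := by
    funext v
    simp only [rho]
    rw [hc₁atte₂]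
  have hrho₁ : rho c₂ e₁ h₁ N = rho g e₁ h₁ N := by
    funext v
    simp only [rho]
    rw [hc₂atte₁]
  -- the two joint results are literally equal
  have hdisj : ∀ x : ℕ, x ∈ h₁.E.image (· + N) → x ∈ h₂.E.image (· + 2 * N) → False := by
    intro x hx₁ hx₂
    obtain ⟨d, hd, rfl⟩ := Finset.mem_image.mp hx₁
    obtain ⟨d', hd', hdd⟩ := Finset.mem_image.mp hx₂
    have := hh₁E d hd
    have hdd' : d' + 2 * N = d + N := hdd
    omega
  have heq : w = w' := by
    apply hyp_eq
    · show (g.V ∪ h₁.V.image (rho g e₁ h₁ N)) ∪ h₂.V.image (rho c₁ e₂ h₂ (2 * N)) =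
        (g.V ∪ h₂.V.image (rho g e₂ h₂ (2 * N))) ∪ h₁.V.image (rho c₂ e₁ h₁ N)
      rw [hrho₂, hrho₁, Finset.union_right_comm]
    · show (g.E.erase e₁ ∪ h₁.E.image (· + N)).erase e₂ ∪ h₂.E.image (· + 2 * N) =
        (g.E.erase e₂ ∪ h₂.E.image (· + 2 * N)).erase e₁ ∪ h₁.E.image (· + N)
      rw [Finset.erase_union_distrib, Finset.erase_union_distrib,
        Finset.erase_eq_of_notMem (old_not_img F₁ he₂),
        Finset.erase_eq_of_notMem (old_not_img F₂ he₁),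
        Finset.erase_right_comm, Finset.union_right_comm]
    · funext x
      show (if x ∈ h₂.E.image (· + 2 * N) then (h₂.att (x - 2 * N)).map (rho c₁ e₂ h₂ (2 * N))
          else c₁.att x) =
        (if x ∈ h₁.E.image (· + N) then (h₁.att (x - N)).map (rho c₂ e₁ h₁ N) else c₂.att x)
      have hc₁x : c₁.att x = if x ∈ h₁.E.image (· + N)
          then (h₁.att (x - N)).map (rho g e₁ h₁ N) else g.att x := rfl
      have hc₂x : c₂.att x = if x ∈ h₂.E.image (· + 2 * N)
          then (h₂.att (x - 2 * N)).map (rho g e₂ h₂ (2 * N)) else g.att x := rfl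
      rw [hc₁x, hc₂x, hrho₂, hrho₁]
      by_cases hx₂ : x ∈ h₂.E.image (· + 2 * N) <;> by_cases hx₁ : x ∈ h₁.E.image (· + N)
      · exact (hdisj x hx₁ hx₂).elim
      · simp only [if_pos hx₂, if_neg hx₁]
      · simp only [if_neg hx₂, if_pos hx₁]
      · simp only [if_neg hx₂, if_neg hx₁]
    · funext x
      show (if x ∈ h₂.E.image (· + 2 * N) then h₂.lab (x - 2 * N) else c₁.lab x) =
        (if x ∈ h₁.E.image (· + N) then h₁.lab (x - N) else c₂.lab x)
      have hc₁x : c₁.lab x = if x ∈ h₁.E.image (· + N) then h₁.lab (x - N) else g.lab x := rfl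
      have hc₂x : c₂.lab x = if x ∈ h₂.E.image (· + 2 * N) then h₂.lab (x - 2 * N)
          else g.lab x := rfl
      rw [hc₁x, hc₂x]
      by_cases hx₂ : x ∈ h₂.E.image (· + 2 * N) <;> by_cases hx₁ : x ∈ h₁.E.image (· + N)
      · exact (hdisj x hx₁ hx₂).elim
      · simp only [if_pos hx₂, if_neg hx₁]
      · simp only [if_neg hx₂, if_pos hx₁]
      · simp only [if_neg hx₂, if_neg hx₁]
    · rfl
  -- assemble
  have hgc₁ : Good G rkT c₁ := repl_good hWF hg hB₁ r₁
  have hgc₂ : Good G rkT c₂ := repl_good hWF hg hB₂ r₂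
  have hgz₁ : Good G rkT z₁ := repl_good hWF hg hB₁ hrep₁
  have hgz₂ : Good G rkT z₂ := repl_good hWF hg hB₂ hrep₂
  have hiso₁ : z₁.Isomorphic c₁ := repl_unique hokg hok₁ he₁ hrep₁ r₁
  have hiso₂ : z₂.Isomorphic c₂ := repl_unique hokg hok₂ he₂ hrep₂ r₂
  have hstepw : G.Derive c₁ w := ⟨e₂, he₂c₁, B₂, hB₂, by rw [hc₁labe₂, hl₂], r₁₂⟩
  have hstepw' : G.Derive c₂ w' := ⟨e₁, he₁c₂, B₁, hB₁, by rw [hc₂labe₁, hl₁], r₂₁⟩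
  obtain ⟨w₁, hsw₁, hisow₁⟩ :=
    derive_iso hWF hgc₁ (iso_symm (Ok.of_wf hgz₁.1) hiso₁) hstepw
  obtain ⟨w₂, hsw₂, hisow₂⟩ :=
    derive_iso hWF hgc₂ (iso_symm (Ok.of_wf hgz₂.1) hiso₂) hstepw'
  have hgw : Good G rkT w := derive_good hWF hgc₁ hstepw
  refine ⟨w₁, w₂, hsw₁, hsw₂, ?_⟩
  have h1 : w₁.Isomorphic w := iso_symm (Ok.of_wf hgw.1) hisow₁
  have h2 : w.Isomorphic w₂ := heq ▸ hisow₂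
  exact iso_trans h1 h2
end GramAux

namespace GramAux
open HypAux

variable {T : Type} {rkT : T → ℕ} {G : HRGrammar T}

theorem unf (hWF : G.WF rkT) (hacyc : ∀ A : ℕ, ¬ Relation.TransGen G.dep A A) :
    ∀ n (g : HRHypergraph (T ⊕ ℕ)), weight G g ≤ n → Good G rkT g →
      ∀ t₁ t₂, Relation.ReflTransGen G.Derive g t₁ → HRGrammar.Terminal t₁ →
        Relation.ReflTransGen G.Derive g t₂ → HRGrammar.Terminal t₂ →
        t₁.Isomorphic t₂ := by
  intro n
  induction n using Nat.strong_induction_on with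
  | _ n ih =>
    intro g hw hg t₁ t₂ hrt₁ ht₁ hrt₂ ht₂
    rcases Relation.ReflTransGen.cases_head hrt₁ with rfl | ⟨g₁, hs₁, hrt₁'⟩
    · rcases Relation.ReflTransGen.cases_head hrt₂ with rfl | ⟨g₂, hs₂, _⟩
      · exact iso_refl _
      · exact (terminal_no_step ht₁ hs₂).elim
    · rcases Relation.ReflTransGen.cases_head hrt₂ with rfl | ⟨g₂, hs₂, hrt₂'⟩
      · exact (terminal_no_step ht₂ hs₁).elim
      · obtain ⟨e₁, he₁, B₁, hB₁, hl₁, hrep₁⟩ := hs₁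
        obtain ⟨e₂, he₂, B₂, hB₂, hl₂, hrep₂⟩ := hs₂
        have hgg₁ : Good G rkT g₁ := repl_good hWF hg hB₁ hrep₁
        have hgg₂ : Good G rkT g₂ := repl_good hWF hg hB₂ hrep₂
        have hw₁ : weight G g₁ < weight G g := weight_step hWF hacyc he₁ hl₁ hB₁ hrep₁
        have hw₂ : weight G g₂ < weight G g := weight_step hWF hacyc he₂ hl₂ hB₂ hrep₂
        by_cases hee : e₁ = e₂
        · subst hee
          have hBB : B₁ = B₂ := by
            rw [hl₁] at hl₂
            exact Sum.inr.inj hl₂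
          subst hBB
          have hiso : g₁.Isomorphic g₂ :=
            repl_unique (Ok.of_wf hg.1) (Ok.of_wf (hWF.2.2.2.1 B₁ hB₁).1) he₁ hrep₁ hrep₂
          obtain ⟨t₂', hrt₂'', hit₂⟩ :=
            rt_derive_iso hWF hgg₂ (iso_symm (Ok.of_wf hgg₁.1) hiso) hrt₂'
          have hgt₂ : Good G rkT t₂ := rt_good hWF hgg₂ hrt₂'
          have ht₂' : HRGrammar.Terminal t₂' :=
            terminal_of_iso (iso_symm (Ok.of_wf hgt₂.1) hit₂) ht₂
          have h12 := ih (weight G g₁) (by omega) g₁ le_rfl hgg₁ t₁ t₂' hrt₁' ht₁ hrt₂'' ht₂'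
          exact iso_trans h12 (iso_symm (Ok.of_wf hgt₂.1) hit₂)
        · obtain ⟨w₁, w₂, hsw₁, hsw₂, hwiso⟩ :=
            commute hWF hg he₁ hl₁ hB₁ hrep₁ he₂ hl₂ hB₂ hrep₂ hee
          have hgw₁ : Good G rkT w₁ := derive_good hWF hgg₁ hsw₁
          have hgw₂ : Good G rkT w₂ := derive_good hWF hgg₂ hsw₂
          obtain ⟨t₃, hrt₃, ht₃⟩ := normalize hWF hacyc (weight G w₁) w₁ le_rfl hgw₁
          have h13 : t₁.Isomorphic t₃ :=
            ih (weight G g₁) (by omega) g₁ le_rfl hgg₁ t₁ t₃ hrt₁' ht₁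
              (Relation.ReflTransGen.head hsw₁ hrt₃) ht₃
          obtain ⟨t₃', hrt₃', hit₃⟩ := rt_derive_iso hWF hgw₁ hwiso hrt₃
          have hgt₃ : Good G rkT t₃ := rt_good hWF hgw₁ hrt₃
          have ht₃' : HRGrammar.Terminal t₃' :=
            terminal_of_iso (iso_symm (Ok.of_wf hgt₃.1) hit₃) ht₃
          have h23 : t₂.Isomorphic t₃' :=
            ih (weight G g₂) (by omega) g₂ le_rfl hgg₂ t₂ t₃' hrt₂' ht₂
              (Relation.ReflTransGen.head hsw₂ hrt₃') ht₃'
          have hgt₂ : Good G rkT t₂ := rt_good hWF hgg₂ hrt₂'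
          exact iso_trans h13 (iso_trans hit₃ (iso_symm (Ok.of_wf hgt₂.1) h23))

end GramAux

namespace GramAux
open HypAux

variable {T : Type} {rkT : T → ℕ} {G : HRGrammar T} {A : ℕ}

noncomputable def cA (G : HRGrammar T) (A : ℕ) (g : HRHypergraph (T ⊕ ℕ)) : ℕ :=
  (g.E.filter fun e => g.lab e = Sum.inr A).card

theorem elim_derive (hA : A ∈ G.NT) {x y : HRHypergraph (T ⊕ ℕ)}
    (h : G.ElimStep A x y) : G.Derive x y := by
  obtain ⟨e, he, hlab, hrep⟩ := h
  exact ⟨e, he, A, hA, hlab, hrep⟩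

theorem elim_sub (hA : A ∈ G.NT) {x y : HRHypergraph (T ⊕ ℕ)}
    (h : Relation.ReflTransGen (G.ElimStep A) x y) :
    Relation.ReflTransGen G.Derive x y := by
  induction h with
  | refl => exact Relation.ReflTransGen.refl
  | tail _ hstep ih => exact ih.tail (elim_derive hA hstep)

theorem noA_rhs (hacyc : ∀ A' : ℕ, ¬ Relation.TransGen G.dep A' A') (hA : A ∈ G.NT) :
    ∀ d ∈ (G.rhs A).E, (G.rhs A).lab d ≠ Sum.inr A := by
  intro d hd hc
  exact hacyc A (Relation.TransGen.single ⟨hA, hA, d, hd, hc⟩)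

theorem step_count (hnoA : ∀ d ∈ (G.rhs A).E, (G.rhs A).lab d ≠ Sum.inr A)
    {x y : HRHypergraph (T ⊕ ℕ)} (hstep : G.ElimStep A x y) : cA G A y + 1 = cA G A x := by
  obtain ⟨e, he, hlab, hrep⟩ := hstep
  have h1 : ∑ x' ∈ y.E, (if y.lab x' = Sum.inr A then 1 else 0) =
      ∑ x' ∈ x.E.erase e, (if x.lab x' = Sum.inr A then 1 else 0) +
        ∑ d ∈ (G.rhs A).E, (if (G.rhs A).lab d = Sum.inr A then 1 else 0) := by
    simpa using sum_repl hrep fun _ ℓ => if ℓ = Sum.inr A then 1 else 0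
  have h2 : ∑ d ∈ (G.rhs A).E, (if (G.rhs A).lab d = Sum.inr A then 1 else 0) = 0 :=
    Finset.sum_eq_zero fun d hd => if_neg (hnoA d hd)
  have h3 : ∑ x' ∈ x.E.erase e, (if x.lab x' = Sum.inr A then 1 else 0) +
      (if x.lab e = Sum.inr A then 1 else 0) =
      ∑ x' ∈ x.E, (if x.lab x' = Sum.inr A then 1 else 0) :=
    Finset.sum_erase_add x.E _ he
  have h4 : (if x.lab e = Sum.inr A then 1 else 0) = 1 := if_pos hlab
  have hcy : cA G A y = ∑ x' ∈ y.E, (if y.lab x' = Sum.inr A then 1 else 0) :=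
    Finset.card_filter _ _
  have hcx : cA G A x = ∑ x' ∈ x.E, (if x.lab x' = Sum.inr A then 1 else 0) :=
    Finset.card_filter _ _
  omega

theorem step_size (hWF : G.WF rkT) (hA : A ∈ G.NT) {x y : HRHypergraph (T ⊕ ℕ)}
    (hg : Good G rkT x) (hstep : G.ElimStep A x y) :
    y.size + G.handleSize A = x.size + (G.rhs A).size := by
  obtain ⟨e, he, hlab, hrep⟩ := hstep
  have hrhs := hWF.2.2.2.1 A hA
  have h1 : ∑ x' ∈ y.E, (if (y.att x').length ≤ 2 then 1 else (y.att x').length) =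
      ∑ x' ∈ x.E.erase e, (if (x.att x').length ≤ 2 then 1 else (x.att x').length) +
        ∑ d ∈ (G.rhs A).E,
          (if ((G.rhs A).att d).length ≤ 2 then 1 else ((G.rhs A).att d).length) := by
    simpa using sum_repl hrep fun n _ => if n ≤ 2 then 1 else n
  have h2 : ∑ x' ∈ x.E.erase e, (if (x.att x').length ≤ 2 then 1 else (x.att x').length) +
      (if (x.att e).length ≤ 2 then 1 else (x.att e).length) =
      ∑ x' ∈ x.E, (if (x.att x').length ≤ 2 then 1 else (x.att x').length) :=
    Finset.sum_erase_add x.E _ he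
  have h3 : y.V.card + (G.rhs A).ext.length = x.V.card + (G.rhs A).V.card :=
    cardV_repl (Ok.of_wf hg.1) he hrhs.1.2.2.1 hrhs.1.2.2.2 hrep
  have h4 : (x.att e).length = G.rkN A := att_len_good hg he hlab
  have h5 : (G.rhs A).ext.length = G.rkN A := hrhs.2
  have h6 : G.handleSize A = G.rkN A + (if G.rkN A ≤ 2 then 1 else G.rkN A) := by
    unfold HRGrammar.handleSize
    by_cases hr : G.rkN A ≤ 2 <;> simp [hr] <;> omega
  have hey : y.size = y.V.card +
      ∑ x' ∈ y.E, (if (y.att x').length ≤ 2 then 1 else (y.att x').length) := rfl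
  have hex : x.size = x.V.card +
      ∑ x' ∈ x.E, (if (x.att x').length ≤ 2 then 1 else (x.att x').length) := rfl
  have her : (G.rhs A).size = (G.rhs A).V.card +
      ∑ d ∈ (G.rhs A).E,
        (if ((G.rhs A).att d).length ≤ 2 then 1 else ((G.rhs A).att d).length) := rfl
  rw [h4] at h2
  omega

theorem elim_rt_inv (hWF : G.WF rkT) (hA : A ∈ G.NT)
    (hnoA : ∀ d ∈ (G.rhs A).E, (G.rhs A).lab d ≠ Sum.inr A)
    {x y : HRHypergraph (T ⊕ ℕ)} (hrt : Relation.ReflTransGen (G.ElimStep A) x y)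
    (hg : Good G rkT x) :
    (y.size : ℤ) + (cA G A y : ℤ) * ((G.rhs A).size - G.handleSize A) =
      (x.size : ℤ) + (cA G A x : ℤ) * ((G.rhs A).size - G.handleSize A) := by
  induction hrt with
  | refl => rfl
  | @tail y' y hrt hstep ih =>
      have hgy' : Good G rkT y' := rt_good hWF hg (elim_sub hA hrt)
      have hsz := step_size hWF hA hgy' hstep
      have hct := step_count hnoA hstep
      have hszz : (y.size : ℤ) = (y'.size : ℤ) + ((G.rhs A).size : ℤ) - G.handleSize A := by
        have := hsz
        push_cast
        omega
      have hctz : (cA G A y' : ℤ) = (cA G A y : ℤ) + 1 := by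
        push_cast
        omega
      rw [hszz, ← ih, hctz]
      ring

theorem elim_all_size (hWF : G.WF rkT) (hA : A ∈ G.NT)
    (hnoA : ∀ d ∈ (G.rhs A).E, (G.rhs A).lab d ≠ Sum.inr A)
    {x y : HRHypergraph (T ⊕ ℕ)} (hall : G.ElimAll A x y) (hg : Good G rkT x) :
    (y.size : ℤ) = (x.size : ℤ) +
      (cA G A x : ℤ) * ((G.rhs A).size - G.handleSize A) := by
  have h1 := elim_rt_inv hWF hA hnoA hall.1 hg
  have h2 : cA G A y = 0 := by
    unfold cA
    rw [Finset.card_eq_zero, Finset.filter_eq_empty_iff]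
    exact fun e he => hall.2 e he
  rw [h2] at h1
  push_cast at h1
  linarith

/-- labels in a step result -/
theorem step_lab_cases {x z : HRHypergraph (T ⊕ ℕ)} (hstep : G.ElimStep A x z) :
    ∀ e' ∈ z.E, (e' ∈ x.E ∧ z.lab e' = x.lab e') ∨
      ∃ d ∈ (G.rhs A).E, z.lab e' = (G.rhs A).lab d := by
  obtain ⟨e, he, hlab, hrep⟩ := hstep
  obtain ⟨ρ, η, hρi, hηi, hρf, hρx, hηf, hVz, hEz, hold, hnew, hzx⟩ := hrep
  intro e' he'
  rw [hEz] at he'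
  rcases Finset.mem_union.mp he' with h' | h'
  · exact Or.inl ⟨Finset.mem_of_mem_erase h', (hold e' h').2⟩
  · obtain ⟨d, hd, rfl⟩ := Finset.mem_image.mp h'
    exact Or.inr ⟨d, hd, (hnew d hd).2⟩

theorem step_lab_persist {x z : HRHypergraph (T ⊕ ℕ)} (hstep : G.ElimStep A x z) :
    ∀ e' ∈ x.E, x.lab e' ≠ Sum.inr A → e' ∈ z.E ∧ z.lab e' = x.lab e' := by
  obtain ⟨e, he, hlab, hrep⟩ := hstep
  obtain ⟨ρ, η, hρi, hηi, hρf, hρx, hηf, hVz, hEz, hold, hnew, hzx⟩ := hrep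
  intro e' he' hne
  have hee : e' ≠ e := fun hc => hne (by rw [hc, hlab])
  have hmem : e' ∈ x.E.erase e := Finset.mem_erase.mpr ⟨hee, he'⟩
  constructor
  · rw [hEz]; exact Finset.mem_union_left _ hmem
  · exact (hold e' hmem).2

theorem rt_lab_persist {x y : HRHypergraph (T ⊕ ℕ)}
    (hrt : Relation.ReflTransGen (G.ElimStep A) x y) {ℓ : T ⊕ ℕ} (hne : ℓ ≠ Sum.inr A)
    (hex : ∃ e ∈ x.E, x.lab e = ℓ) : ∃ e ∈ y.E, y.lab e = ℓ := by
  induction hrt with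
  | refl => exact hex
  | tail _ hstep ih =>
      obtain ⟨e, he, hl⟩ := ih
      have := step_lab_persist hstep e he (by rw [hl]; exact hne)
      exact ⟨e, this.1, by rw [this.2, hl]⟩

theorem rt_lab_sub (hnoA : ∀ d ∈ (G.rhs A).E, (G.rhs A).lab d ≠ Sum.inr A)
    {x y : HRHypergraph (T ⊕ ℕ)} (hrt : Relation.ReflTransGen (G.ElimStep A) x y) :
    ∀ ℓ : T ⊕ ℕ, (∃ e ∈ y.E, y.lab e = ℓ) →
      (∃ e ∈ x.E, x.lab e = ℓ) ∨
        ((∃ e ∈ x.E, x.lab e = Sum.inr A) ∧ ∃ d ∈ (G.rhs A).E, (G.rhs A).lab d = ℓ) := by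
  induction hrt with
  | refl => exact fun ℓ h => Or.inl h
  | @tail y' y hrt hstep ih =>
      intro ℓ hex
      obtain ⟨e, he, hl⟩ := hex
      rcases step_lab_cases hstep e he with ⟨hey', hl'⟩ | ⟨d, hd, hl'⟩
      · exact ih ℓ ⟨e, hey', by rw [← hl', hl]⟩
      · -- ℓ comes from the copy of rhs A; y' must have an A-labelled edge
        obtain ⟨e₀, he₀, hlab₀, _⟩ := hstep
        rcases ih (Sum.inr A) ⟨e₀, he₀, hlab₀⟩ with hxa | ⟨hxa, d', hd', hl''⟩
        · exact Or.inr ⟨hxa, d, hd, by rw [← hl', hl]⟩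
        · exact absurd hl'' (hnoA d' hd')

theorem elim_lab_new (hnoA : ∀ d ∈ (G.rhs A).E, (G.rhs A).lab d ≠ Sum.inr A)
    {x y : HRHypergraph (T ⊕ ℕ)} (hall : G.ElimAll A x y)
    (hxa : ∃ e ∈ x.E, x.lab e = Sum.inr A) :
    ∀ d ∈ (G.rhs A).E, ∃ e' ∈ y.E, y.lab e' = (G.rhs A).lab d := by
  intro d hd
  rcases Relation.ReflTransGen.cases_head hall.1 with heq | ⟨z, hstep, hrt⟩
  · obtain ⟨e, he, hl⟩ := hxa
    rw [heq] at he hl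
    exact absurd hl (hall.2 e he)
  · -- the first step introduces a copy of rhs A
    have hz : ∃ e' ∈ z.E, z.lab e' = (G.rhs A).lab d := by
      obtain ⟨e₀, he₀, hlab₀, hrep⟩ := hstep
      obtain ⟨ρ, η, hρi, hηi, hρf, hρx, hηf, hVz, hEz, hold, hnew, hzx⟩ := hrep
      refine ⟨η d, ?_, (hnew d hd).2⟩
      rw [hEz]
      exact Finset.mem_union_right _ (Finset.mem_image_of_mem _ hd)
    exact rt_lab_persist hrt (hnoA d hd) hz

theorem rt_ext {x y : HRHypergraph (T ⊕ ℕ)}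
    (hrt : Relation.ReflTransGen (G.ElimStep A) x y) : y.ext = x.ext := by
  induction hrt with
  | refl => rfl
  | tail _ hstep ih =>
      obtain ⟨e, he, hlab, hrep⟩ := hstep
      obtain ⟨ρ, η, hρi, hηi, hρf, hρx, hηf, hVz, hEz, hold, hnew, hzx⟩ := hrep
      rw [hzx, ih]

/-- lifting a whole elimination chain through an outer replacement -/
theorem lift_chain (hWF : G.WF rkT) (hA : A ∈ G.NT) {c : HRHypergraph (T ⊕ ℕ)} {e : ℕ}
    (he : e ∈ c.E) {h h' : HRHypergraph (T ⊕ ℕ)}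
    (hrt : Relation.ReflTransGen (G.ElimStep A) h h') (hgh : Good G rkT h) :
    ∀ {z}, IsReplacement c e h z →
      ∃ y, Relation.ReflTransGen G.Derive z y ∧ IsReplacement c e h' y := by
  induction hrt with
  | refl => exact fun hz => ⟨_, Relation.ReflTransGen.refl, hz⟩
  | @tail h₁ h₂ hrt hstep ih =>
      intro z hz
      obtain ⟨y, hrty, hrepy⟩ := ih hz
      obtain ⟨d, hd, hlabd, hrep2⟩ := hstep
      have hgh₁ : Good G rkT h₁ := rt_good hWF hgh (elim_sub hA hrt)
      obtain ⟨ed, z₁, hedy, hlabed, hrep3, hrep4⟩ :=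
        repl_lift (Ok.of_wf hgh₁.1) (Ok.of_wf (hWF.2.2.2.1 A hA).1) he hd hrepy hrep2
      have hstepz : G.Derive y z₁ := ⟨ed, hedy, A, hA, by rw [hlabed, hlabd], hrep3⟩
      exact ⟨z₁, hrty.tail hstepz, hrep4⟩

end GramAux

/-- Let `G` be an SL-HR grammar and `A` a nonterminal, and
let `G'` be obtained from `G` by replacing every `A`-labeled edge in the
start graph and in the right-hand sides of the other rules by `rhs(A)` and
removing `A` together with its rule.  Then `G'` is an SL-HR grammar with
`val(G')` isomorphic to `val(G)` and `|G'| = |G| + con(A)`. -/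
theorem eliminate_nonterminal_size_change {T : Type} (rkT : T → ℕ)
    (G : HRGrammar T) (hWF : G.WF rkT) (hSL : G.SL) (A : ℕ) (hA : A ∈ G.NT)
    (G' : HRGrammar T)
    (hNT : G'.NT = G.NT.erase A)
    (hrk : ∀ B ∈ G'.NT, G'.rkN B = G.rkN B)
    (hS : G.ElimAll A G.S G'.S)
    (hrules : ∀ B ∈ G'.NT, G.ElimAll A (G.rhs B) (G'.rhs B)) :
    G'.WF rkT ∧ G'.SL ∧
      (∀ g ∈ G.Lang, ∀ g' ∈ G'.Lang, g.Isomorphic g') ∧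
      (G'.size : ℤ) = (G.size : ℤ) + G.con A := by
  classical
  obtain ⟨hacyc, hreach⟩ := hSL
  have hnoA := GramAux.noA_rhs hacyc hA
  have hsub : G'.NT ⊆ G.NT := by rw [hNT]; exact Finset.erase_subset _ _
  have hBne : ∀ B ∈ G'.NT, B ≠ A := by
    intro B hB; rw [hNT] at hB; exact (Finset.mem_erase.mp hB).1
  have memNT' : ∀ {C : ℕ}, C ∈ G.NT → C ≠ A → C ∈ G'.NT := by
    intro C h1 h2; rw [hNT]; exact Finset.mem_erase.mpr ⟨h2, h1⟩
  have hgS' : GramAux.Good G rkT G'.S :=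
    GramAux.rt_good hWF (GramAux.good_S hWF) (GramAux.elim_sub hA hS.1)
  have hgrhs' : ∀ B ∈ G'.NT, GramAux.Good G rkT (G'.rhs B) := fun B hB =>
    GramAux.rt_good hWF (GramAux.good_rhs hWF (hsub hB)) (GramAux.elim_sub hA (hrules B hB).1)
  have htransfer : ∀ g : HRHypergraph (T ⊕ ℕ), GramAux.Good G rkT g →
      (∀ e ∈ g.E, g.lab e ≠ Sum.inr A) →
      g.WF (G'.rk rkT) ∧ ∀ e ∈ g.E, ∀ B : ℕ, g.lab e = Sum.inr B → B ∈ G'.NT := by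
    intro g hg hno
    have hlabNT' : ∀ e ∈ g.E, ∀ B : ℕ, g.lab e = Sum.inr B → B ∈ G'.NT := by
      intro e he B hB
      exact memNT' (hg.2 e he B hB) (fun hc => hno e he (hc ▸ hB))
    refine ⟨⟨hg.1.1, ?_, hg.1.2.2⟩, hlabNT'⟩
    intro e he
    refine ⟨(hg.1.2.1 e he).1, (hg.1.2.1 e he).2.1, ?_, (hg.1.2.1 e he).2.2.2⟩
    have hlen := (hg.1.2.1 e he).2.2.1
    rcases hl : g.lab e with a | B
    · rw [hl] at hlen
      exact hlen
    · rw [hl] at hlen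
      have hlen' : (g.att e).length = G.rkN B := hlen
      show (g.att e).length = G'.rkN B
      rw [hrk B (hlabNT' e he B hl)]
      exact hlen'
  have hWF' : G'.WF rkT := by
    refine ⟨hWF.1, ?_, (htransfer G'.S hgS' hS.2).1, ?_, (htransfer G'.S hgS' hS.2).2, ?_⟩
    · intro B hB; rw [hrk B hB]; exact hWF.2.1 B (hsub hB)
    · intro B hB
      refine ⟨(htransfer _ (hgrhs' B hB) (hrules B hB).2).1, ?_⟩
      rw [GramAux.rt_ext (hrules B hB).1, hrk B hB]
      exact (hWF.2.2.2.1 B (hsub hB)).2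
    · intro B hB; exact (htransfer _ (hgrhs' B hB) (hrules B hB).2).2
  -- straight-line condition for G'
  have hAsucc : ∀ C, G.dep A C → C ≠ A :=
    fun C h hc => hacyc A (Relation.TransGen.single (hc ▸ h))
  have dep'_intro : ∀ B C : ℕ, B ∈ G'.NT → C ∈ G'.NT → G.dep B C → G'.dep B C := by
    intro B C hB hC hdep
    obtain ⟨-, -, e, he, hl⟩ := hdep
    obtain ⟨e', he', hl'⟩ := GramAux.rt_lab_persist (hrules B hB).1
      (fun hc => (hBne C hC) (Sum.inr.inj hc)) ⟨e, he, hl⟩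
    exact ⟨hB, hC, e', he', hl'⟩
  have dep'_skip : ∀ B C : ℕ, B ∈ G'.NT → C ∈ G'.NT → G.dep B A → G.dep A C → G'.dep B C := by
    intro B C hB hC h1 h2
    obtain ⟨-, -, e, he, hl⟩ := h1
    obtain ⟨-, -, d, hd, hld⟩ := h2
    obtain ⟨e', he', hl'⟩ := GramAux.elim_lab_new hnoA (hrules B hB) ⟨e, he, hl⟩ d hd
    exact ⟨hB, hC, e', he', by rw [hl', hld]⟩
  have dep'le : ∀ B C : ℕ, G'.dep B C → Relation.TransGen G.dep B C := by
    intro B C hdep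
    obtain ⟨hB, hC, e, he, hl⟩ := hdep
    rcases GramAux.rt_lab_sub hnoA (hrules B hB).1 (Sum.inr C) ⟨e, he, hl⟩ with
      ⟨e', he', hl'⟩ | ⟨⟨e', he', hl'⟩, d, hd, hld⟩
    · exact Relation.TransGen.single ⟨hsub hB, hsub hC, e', he', hl'⟩
    · exact Relation.TransGen.head ⟨hsub hB, hA, e', he', hl'⟩
        (Relation.TransGen.single ⟨hA, hsub hC, d, hd, hld⟩)
  have transle : ∀ {a b : ℕ}, Relation.TransGen G'.dep a b → Relation.TransGen G.dep a b := by
    intro a b h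
    induction h with
    | single h => exact dep'le _ _ h
    | tail _ h2 ih => exact ih.trans (dep'le _ _ h2)
  have hacyc' : ∀ A' : ℕ, ¬ Relation.TransGen G'.dep A' A' :=
    fun A' hcc => hacyc A' (transle hcc)
  have path : ∀ D B' : ℕ, Relation.ReflTransGen G.dep D B' → B' ≠ A →
      ((D ≠ A → Relation.ReflTransGen G'.dep D B') ∧
       (D = A → ∃ E', G.dep A E' ∧ Relation.ReflTransGen G'.dep E' B')) := by
    intro D B' hrt hBA
    induction hrt using Relation.ReflTransGen.head_induction_on with
    | refl => exact ⟨fun _ => Relation.ReflTransGen.refl, fun hDA => absurd hDA hBA⟩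
    | @head D E hdep hrt ih =>
      constructor
      · intro hDA
        by_cases hE : E = A
        · obtain ⟨E', hAE', hrt'⟩ := ih.2 hE
          have hE'A : E' ≠ A := hAsucc E' hAE'
          have hdd : G'.dep D E' := dep'_skip D E' (memNT' hdep.1 hDA)
            (memNT' hAE'.2.1 hE'A) (hE ▸ hdep) hAE'
          exact Relation.ReflTransGen.head hdd hrt'
        · have hdd : G'.dep D E := dep'_intro D E (memNT' hdep.1 hDA)
            (memNT' hdep.2.1 hE) hdep
          exact Relation.ReflTransGen.head hdd (ih.1 hE)
      · intro hDA
        have hdep' : G.dep A E := hDA ▸ hdep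
        have hE : E ≠ A := hAsucc E hdep'
        exact ⟨E, hdep', ih.1 hE⟩
  have hSL' : G'.SL := by
    refine ⟨hacyc', ?_⟩
    intro B hB
    obtain ⟨C, ⟨e, heS, hlabS⟩, hrtCB⟩ := hreach B (hsub hB)
    have hBA : B ≠ A := hBne B hB
    by_cases hC : C = A
    · subst hC
      obtain ⟨E', hAE', hrt'⟩ := (path _ B hrtCB hBA).2 rfl
      obtain ⟨-, -, d, hd, hld⟩ := hAE'
      obtain ⟨e', he', hl'⟩ := GramAux.elim_lab_new hnoA hS ⟨e, heS, hlabS⟩ d hd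
      exact ⟨E', ⟨e', he', by rw [hl', hld]⟩, hrt'⟩
    · have hrt' := (path C B hrtCB hBA).1 hC
      obtain ⟨e', he', hl'⟩ := GramAux.rt_lab_persist hS.1
        (fun hc => hC (Sum.inr.inj hc)) ⟨e, heS, hlabS⟩
      exact ⟨C, ⟨e', he', hl'⟩, hrt'⟩
  -- language preservation
  have htrans2 : ∀ g, GramAux.Good G' rkT g → GramAux.Good G rkT g := by
    intro g hg
    have hlab : ∀ e ∈ g.E, ∀ B : ℕ, g.lab e = Sum.inr B → B ∈ G.NT :=
      fun e he B hB => hsub (hg.2 e he B hB)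
    refine ⟨⟨hg.1.1, ?_, hg.1.2.2⟩, hlab⟩
    intro e he
    refine ⟨(hg.1.2.1 e he).1, (hg.1.2.1 e he).2.1, ?_, (hg.1.2.1 e he).2.2.2⟩
    have hlen := (hg.1.2.1 e he).2.2.1
    rcases hl : g.lab e with a | B
    · rw [hl] at hlen
      exact hlen
    · rw [hl] at hlen
      have hlen' : (g.att e).length = G'.rkN B := hlen
      show (g.att e).length = G.rkN B
      rw [← hrk B (hg.2 e he B hl)]
      exact hlen'
  have sim : ∀ g', Relation.ReflTransGen G'.Derive G'.S g' →
      ∃ t, Relation.ReflTransGen G.Derive G.S t ∧ GramAux.Good G rkT t ∧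
        t.Isomorphic g' := by
    intro g' hrt
    induction hrt with
    | refl => exact ⟨G'.S, GramAux.elim_sub hA hS.1, hgS', HypAux.iso_refl _⟩
    | @tail c u hrt hstep ih =>
        obtain ⟨t, hrtt, hgt, hiso⟩ := ih
        obtain ⟨e, he, B, hB', hlab, hrep'⟩ := hstep
        have hgc' : GramAux.Good G' rkT c := GramAux.rt_good hWF' (GramAux.good_S hWF') hrt
        have hgcG : GramAux.Good G rkT c := htrans2 c hgc'
        have hattlen : (c.att e).length = G.rkN B := by
          rw [GramAux.att_len_good hgc' he hlab]
          exact hrk B hB'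
        obtain ⟨z, hrepz⟩ := GramAux.exists_repl hWF he (hgcG.1.2.1 e he).2.1
          (hgcG.1.2.1 e he).1 hattlen (hsub hB')
        have hstepz : G.Derive c z := ⟨e, he, B, hsub hB', hlab, hrepz⟩
        obtain ⟨y, hrty, hrepy⟩ := GramAux.lift_chain hWF hA he (hrules B hB').1
          (GramAux.good_rhs hWF (hsub hB')) hrepz
        have hyu : y.Isomorphic u :=
          HypAux.repl_unique (HypAux.Ok.of_wf hgcG.1)
            (HypAux.Ok.of_wf (hWF'.2.2.2.1 B hB').1) he hrepy hrep'
        have hrtcy : Relation.ReflTransGen G.Derive c y :=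
          Relation.ReflTransGen.head hstepz hrty
        obtain ⟨y', hrty', hisoy'⟩ := GramAux.rt_derive_iso hWF hgcG
          (HypAux.iso_symm (HypAux.Ok.of_wf hgt.1) hiso) hrtcy
        have hgy : GramAux.Good G rkT y := GramAux.rt_good hWF hgcG hrtcy
        have hgy' : GramAux.Good G rkT y' := GramAux.rt_good hWF hgt hrty'
        refine ⟨y', hrtt.trans hrty', hgy', ?_⟩
        exact HypAux.iso_trans (HypAux.iso_symm (HypAux.Ok.of_wf hgy.1) hisoy') hyu
  have hlang : ∀ g ∈ G.Lang, ∀ g' ∈ G'.Lang, g.Isomorphic g' := by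
    intro g hg g' hg'
    obtain ⟨t, hrtt, hgt, hiso⟩ := sim g' hg'.1
    have htterm : HRGrammar.Terminal t := HypAux.terminal_of_iso hiso hg'.2
    have hmain := GramAux.unf hWF hacyc (GramAux.weight G G.S) G.S le_rfl
      (GramAux.good_S hWF) g t hg.1 hg.2 hrtt htterm
    exact HypAux.iso_trans hmain hiso
  -- size computation
  have hsize : (G'.size : ℤ) = (G.size : ℤ) + G.con A := by
    set Δ : ℤ := ((G.rhs A).size : ℤ) - G.handleSize A with hΔ
    have hDS : (G'.S.size : ℤ) = (G.S.size : ℤ) + (GramAux.cA G A G.S : ℤ) * Δ :=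
      GramAux.elim_all_size hWF hA hnoA hS (GramAux.good_S hWF)
    have hDrhs : ∀ B ∈ G'.NT, ((G'.rhs B).size : ℤ) =
        ((G.rhs B).size : ℤ) + (GramAux.cA G A (G.rhs B) : ℤ) * Δ :=
      fun B hB => GramAux.elim_all_size hWF hA hnoA (hrules B hB)
        (GramAux.good_rhs hWF (hsub hB))
    have hcArhsA : GramAux.cA G A (G.rhs A) = 0 := by
      unfold GramAux.cA
      rw [Finset.card_eq_zero, Finset.filter_eq_empty_iff]
      exact fun d hd => hnoA d hd
    have hsum1 : ∑ B ∈ G'.NT, ((G.rhs B).size : ℤ) + ((G.rhs A).size : ℤ) =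
        ∑ B ∈ G.NT, ((G.rhs B).size : ℤ) := by
      rw [hNT]
      exact Finset.sum_erase_add _ _ hA
    have hsum2 : ∑ B ∈ G'.NT, (GramAux.cA G A (G.rhs B) : ℤ) =
        ∑ B ∈ G.NT, (GramAux.cA G A (G.rhs B) : ℤ) := by
      rw [hNT]
      have h := Finset.sum_erase_add G.NT (fun B => (GramAux.cA G A (G.rhs B) : ℤ)) hA
      simp only [hcArhsA, Nat.cast_zero, add_zero] at h
      exact h
    have href : (G.refCount A : ℤ) = (GramAux.cA G A G.S : ℤ) +
        ∑ B ∈ G.NT, (GramAux.cA G A (G.rhs B) : ℤ) := by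
      unfold HRGrammar.refCount GramAux.cA
      push_cast
      ring
    have hGsz : (G.size : ℤ) = (G.S.size : ℤ) + ∑ B ∈ G.NT, ((G.rhs B).size : ℤ) := by
      unfold HRGrammar.size
      push_cast
      ring
    have hG'sz : (G'.size : ℤ) = (G'.S.size : ℤ) + ∑ B ∈ G'.NT, ((G'.rhs B).size : ℤ) := by
      unfold HRGrammar.size
      push_cast
      ring
    have hcon : G.con A = (G.refCount A : ℤ) * Δ - ((G.rhs A).size : ℤ) := by
      unfold HRGrammar.con
      rw [hΔ]
    rw [hG'sz, hDS, Finset.sum_congr rfl (fun B hB => hDrhs B hB),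
      Finset.sum_add_distrib, ← Finset.sum_mul, hsum2, hcon, href, hGsz]
    linear_combination hsum1
  exact ⟨hWF', hSL', hlang, hsize⟩
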